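/- arXiv:2207.12153 — 4 statements merged into one kernel-verified Lean document; each statement's English description precedes it below -/
import Mathlib

section
/- Let (Ω,T) be a compact metric space with a homeomorphism T, and A : Ω → SL(2,R) continuous, with cocycle iterates A_n(ω) = A(T^{n-1}ω)···A(ω). If there exist L > 0 and k ∈ ℕ such that M := max_{ω∈Ω} (1/k) log‖A_k(ω)‖ < L, then for all ω ∈ Ω and all n ≥ 2k·max_{ω∈Ω} log‖A(ω)‖ / (L − M), one has (1/n) log‖A_n(ω)‖ < L. -/
open scoped Matrix.Norms.L2Operator
open Filter Topology MeasureTheory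

noncomputable abbrev SL2 := Matrix.SpecialLinearGroup (Fin 2) ℝ

noncomputable instance : MetricSpace SL2 :=
  MetricSpace.induced (fun B => (B : Matrix (Fin 2) (Fin 2) ℝ))
    (fun _ _ h => Subtype.ext h) inferInstance

/-- The `n`-step cocycle iterate `A_n(ω) = A(T^{n-1}ω) ⋯ A(ω)`. -/
noncomputable def coc {Ω : Type*} (T : Ω → Ω) (A : Ω → SL2) : ℕ → Ω → SL2
  | 0, _ => 1
  | n + 1, ω => coc T A n (T ω) * A ω

/-- `log ‖A_n(ω)‖`, using the operator norm on 2×2 real matrices. -/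
noncomputable def cocNorm {Ω : Type*} (T : Ω → Ω) (A : Ω → SL2) (n : ℕ) (ω : Ω) : ℝ :=
  Real.log ‖(coc T A n ω : Matrix (Fin 2) (Fin 2) ℝ)‖

/-- Uniform hyperbolicity: `liminf (1/n) log ‖A_n(ω)‖ ≥ L > 0` uniformly in `ω`. -/
def UniformlyHyperbolic {Ω : Type*} (T : Ω → Ω) (A : Ω → SL2) : Prop :=
  ∃ L > (0 : ℝ), ∀ ε > (0 : ℝ), ∃ N : ℕ, ∀ n ≥ N, ∀ ω,
    L - ε < (1 / n : ℝ) * cocNorm T A n ω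

/-- `(1/n) log ‖A_n(ω)‖ → L` uniformly in `ω`. -/
def TendsUniformlyToConst {Ω : Type*} (T : Ω → Ω) (A : Ω → SL2) (L : ℝ) : Prop :=
  ∀ ε > (0 : ℝ), ∃ N : ℕ, ∀ n ≥ N, ∀ ω,
    |(1 / n : ℝ) * cocNorm T A n ω - L| < ε

/-- A uniform cocycle. -/
def IsUniformCocycle {Ω : Type*} (T : Ω → Ω) (A : Ω → SL2) : Prop :=
  ∃ L : ℝ, TendsUniformlyToConst T A L

/-- Uniform behavior: uniformly hyperbolic, or `(1/n) log ‖A_n(ω)‖ → 0` uniformly. -/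
def HasUniformBehavior {Ω : Type*} (T : Ω → Ω) (A : Ω → SL2) : Prop :=
  UniformlyHyperbolic T A ∨ TendsUniformlyToConst T A 0

/-- Any matrix in `SL(2,ℝ)` has L2 operator norm at least 1. -/
lemma sl2_one_le_norm (B : SL2) : 1 ≤ ‖(B : Matrix (Fin 2) (Fin 2) ℝ)‖ := by
  set M := (B : Matrix (Fin 2) (Fin 2) ℝ) with hMdef
  have hdet : M.det = 1 := B.2
  rw [Matrix.det_fin_two] at hdet
  have h0 := M.l2_opNorm_mulVec (EuclideanSpace.single (0 : Fin 2) (1:ℝ))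
  have h1 := M.l2_opNorm_mulVec (EuclideanSpace.single (1 : Fin 2) (1:ℝ))
  simp only [EuclideanSpace.norm_single, norm_one, mul_one] at h0 h1
  have e0 : ‖(EuclideanSpace.equiv (Fin 2) ℝ).symm <|
        Matrix.mulVec M (EuclideanSpace.single (0 : Fin 2) (1:ℝ))‖
      = Real.sqrt (M 0 0 ^ 2 + M 1 0 ^ 2) := by
    rw [EuclideanSpace.norm_eq]
    congr 1
    simp [Fin.sum_univ_two, Matrix.mulVec, dotProduct, EuclideanSpace.single_apply, sq_abs]
  have e1 : ‖(EuclideanSpace.equiv (Fin 2) ℝ).symm <|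
        Matrix.mulVec M (EuclideanSpace.single (1 : Fin 2) (1:ℝ))‖
      = Real.sqrt (M 0 1 ^ 2 + M 1 1 ^ 2) := by
    rw [EuclideanSpace.norm_eq]
    congr 1
    simp [Fin.sum_univ_two, Matrix.mulVec, dotProduct, EuclideanSpace.single_apply, sq_abs]
  rw [e0] at h0; rw [e1] at h1
  have s0 : Real.sqrt (M 0 0 ^ 2 + M 1 0 ^ 2) ^ 2 = M 0 0 ^ 2 + M 1 0 ^ 2 :=
    Real.sq_sqrt (by positivity)
  have s1 : Real.sqrt (M 0 1 ^ 2 + M 1 1 ^ 2) ^ 2 = M 0 1 ^ 2 + M 1 1 ^ 2 :=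
    Real.sq_sqrt (by positivity)
  have hs0 : 0 ≤ Real.sqrt (M 0 0 ^ 2 + M 1 0 ^ 2) := Real.sqrt_nonneg _
  have hs1 : 0 ≤ Real.sqrt (M 0 1 ^ 2 + M 1 1 ^ 2) := Real.sqrt_nonneg _
  have hn : 0 ≤ ‖M‖ := norm_nonneg _
  have huv : 1 ≤ Real.sqrt (M 0 0 ^ 2 + M 1 0 ^ 2) * Real.sqrt (M 0 1 ^ 2 + M 1 1 ^ 2) := by
    nlinarith [sq_nonneg (M 0 0 * M 0 1 + M 1 0 * M 1 1), mul_nonneg hs0 hs1]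
  nlinarith [mul_le_mul h0 h1 hs1 hn]

lemma sl2_norm_pos (B : SL2) : (0:ℝ) < ‖(B : Matrix (Fin 2) (Fin 2) ℝ)‖ :=
  lt_of_lt_of_le one_pos (sl2_one_le_norm B)

lemma log_norm_mul_le (P Q : SL2) :
    Real.log ‖((P * Q : SL2) : Matrix (Fin 2) (Fin 2) ℝ)‖ ≤
      Real.log ‖(P : Matrix (Fin 2) (Fin 2) ℝ)‖ + Real.log ‖(Q : Matrix (Fin 2) (Fin 2) ℝ)‖ := by
  have h : ‖((P * Q : SL2) : Matrix (Fin 2) (Fin 2) ℝ)‖ ≤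
      ‖(P : Matrix (Fin 2) (Fin 2) ℝ)‖ * ‖(Q : Matrix (Fin 2) (Fin 2) ℝ)‖ := by
    rw [Matrix.SpecialLinearGroup.coe_mul]
    exact norm_mul_le _ _
  calc Real.log ‖((P * Q : SL2) : Matrix (Fin 2) (Fin 2) ℝ)‖
      ≤ Real.log (‖(P : Matrix (Fin 2) (Fin 2) ℝ)‖ * ‖(Q : Matrix (Fin 2) (Fin 2) ℝ)‖) :=
        Real.log_le_log (sl2_norm_pos _) h
    _ = _ := Real.log_mul (sl2_norm_pos P).ne' (sl2_norm_pos Q).ne'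

lemma coc_add {Ω : Type*} (T : Ω → Ω) (A : Ω → SL2) (m n : ℕ) (ω : Ω) :
    coc T A (m + n) ω = coc T A m (T^[n] ω) * coc T A n ω := by
  induction n generalizing ω with
  | zero => simp [coc]
  | succ n ih =>
    show coc T A (m + n + 1) ω = _
    rw [coc, coc, ih (T ω), mul_assoc, Function.iterate_succ_apply]

lemma cocNorm_add_le {Ω : Type*} (T : Ω → Ω) (A : Ω → SL2) (m n : ℕ) (ω : Ω) :
    cocNorm T A (m + n) ω ≤ cocNorm T A m (T^[n] ω) + cocNorm T A n ω := by
  unfold cocNorm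
  rw [coc_add]
  exact log_norm_mul_le _ _

lemma cocNorm_zero {Ω : Type*} (T : Ω → Ω) (A : Ω → SL2) (ω : Ω) :
    cocNorm T A 0 ω = 0 := by
  simp [cocNorm, coc]

lemma cocNorm_succ_le {Ω : Type*} (T : Ω → Ω) (A : Ω → SL2) (n : ℕ) (ω : Ω) :
    cocNorm T A (n + 1) ω ≤
      cocNorm T A n (T ω) + Real.log ‖(A ω : Matrix (Fin 2) (Fin 2) ℝ)‖ := by
  unfold cocNorm
  rw [coc]
  exact log_norm_mul_le _ _

/-- Lemma 2.1: if `M := max_ω (1/k) log‖A_k(ω)‖ < L`, then `(1/n) log‖A_n(ω)‖ < L`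
for all `ω` and all `n ≥ 2k·max_ω log‖A(ω)‖ / (L - M)`. -/
theorem lemma_aux_zwei {Ω : Type*} [MetricSpace Ω] [CompactSpace Ω] [Nonempty Ω]
    (T : Ω ≃ₜ Ω) (A : Ω → SL2)
    (hA : Continuous fun ω => (A ω : Matrix (Fin 2) (Fin 2) ℝ))
    (L M c : ℝ) (hL : 0 < L) (k : ℕ) (hk : 0 < k)
    (hM : IsGreatest {x : ℝ | ∃ ω, x = (1 / k : ℝ) * cocNorm (⇑T) A k ω} M)
    (hML : M < L)
    (hc : IsGreatest {x : ℝ | ∃ ω, x = Real.log ‖(A ω : Matrix (Fin 2) (Fin 2) ℝ)‖} c)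
    (hc0 : 0 < c) :
    ∀ ω, ∀ n : ℕ, (2 * k * c) / (L - M) ≤ (n : ℝ) →
      (1 / n : ℝ) * cocNorm (⇑T) A n ω < L := by
  have hk' : (0:ℝ) < k := by exact_mod_cast hk
  have hcA : ∀ ω, Real.log ‖(A ω : Matrix (Fin 2) (Fin 2) ℝ)‖ ≤ c := fun ω => hc.2 ⟨ω, rfl⟩
  have hMk : ∀ ω, cocNorm (⇑T) A k ω ≤ k * M := by
    intro ω
    have h := hM.2 ⟨ω, rfl⟩
    rwa [one_div, inv_mul_le_iff₀ hk'] at h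
  have hM0 : 0 ≤ M := by
    obtain ⟨ω₀, hω₀⟩ := hM.1
    have h0 : 0 ≤ cocNorm (⇑T) A k ω₀ := Real.log_nonneg (sl2_one_le_norm _)
    rw [hω₀]
    positivity
  -- crude bound `cocNorm T A n ω ≤ n * c`
  have hrc : ∀ n : ℕ, ∀ ω, cocNorm (⇑T) A n ω ≤ n * c := by
    intro n
    induction n with
    | zero => intro ω; simp [cocNorm_zero]
    | succ n ih =>
      intro ω
      calc cocNorm (⇑T) A (n + 1) ω
          ≤ cocNorm (⇑T) A n (T ω) + Real.log ‖(A ω : Matrix (Fin 2) (Fin 2) ℝ)‖ :=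
            cocNorm_succ_le (⇑T) A n ω
        _ ≤ n * c + c := add_le_add (ih (T ω)) (hcA ω)
        _ = (n + 1 : ℕ) * c := by push_cast; ring
  -- main bound `cocNorm T A (q*k+r) ω ≤ q*(k*M) + r*c`
  have hqb : ∀ q : ℕ, ∀ r : ℕ, ∀ ω, cocNorm (⇑T) A (q * k + r) ω ≤ q * (k * M) + r * c := by
    intro q
    induction q with
    | zero => intro r ω; simpa using hrc r ω
    | succ q ih =>
      intro r ω
      have heq : (q + 1) * k + r = (q * k + r) + k := by ring
      rw [heq]
      calc cocNorm (⇑T) A ((q * k + r) + k) ω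
          ≤ cocNorm (⇑T) A (q * k + r) (T^[k] ω) + cocNorm (⇑T) A k ω :=
            cocNorm_add_le (⇑T) A (q * k + r) k ω
        _ ≤ (q * (k * M) + r * c) + k * M := add_le_add (ih r (T^[k] ω)) (hMk ω)
        _ = (q + 1 : ℕ) * (k * M) + r * c := by push_cast; ring
  intro ω n hn
  have hLM : 0 < L - M := by linarith
  have hn0 : (0:ℝ) < n := lt_of_lt_of_le (div_pos (by positivity) hLM) hn
  have hnn : 2 * k * c ≤ n * (L - M) := (div_le_iff₀ hLM).mp hn
  have hqr : n / k * k + n % k = n := by rw [mul_comm]; exact Nat.div_add_mod n k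
  have hb := hqb (n / k) (n % k) ω
  rw [hqr] at hb
  have hqk : ((n / k : ℕ) : ℝ) * k = (n : ℝ) - ((n % k : ℕ) : ℝ) := by
    have h := congrArg (fun m : ℕ => (m : ℝ)) hqr
    push_cast at h
    linarith
  have hr_le : ((n % k : ℕ) : ℝ) ≤ (k : ℝ) := by exact_mod_cast (Nat.mod_lt n hk).le
  have hr0 : (0:ℝ) ≤ ((n % k : ℕ) : ℝ) := Nat.cast_nonneg _
  have hbb : cocNorm (⇑T) A n ω ≤ ((n : ℝ) - ((n % k : ℕ) : ℝ)) * M + ((n % k : ℕ) : ℝ) * c := by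
    calc cocNorm (⇑T) A n ω ≤ ((n / k : ℕ) : ℝ) * ((k : ℝ) * M) + ((n % k : ℕ) : ℝ) * c := hb
      _ = _ := by rw [← mul_assoc, hqk]
  have hfin : cocNorm (⇑T) A n ω < (n : ℝ) * L := by
    nlinarith [mul_le_mul_of_nonneg_right hr_le hc0.le, mul_nonneg hr0 hM0,
      mul_pos hk' hc0]
  rw [one_div, inv_mul_lt_iff₀ hn0]
  exact hfin
end

section
/- Let (Ω,T) be a dynamical system and I ⊂ ℝ a compact interval. Define Var_n(A) := sup over E ∈ I and ω, ϱ ∈ Ω of |log‖A_n(E,ω)‖ − log‖A_n(E,ϱ)‖|. Then any A ∈ C(I × Ω, SL(2,R)) with liminf_{n→∞} (1/n) Var_n(A) = 0 has the property that A(E,·) is a uniform cocycle for every E ∈ I. -/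
open scoped Matrix.Norms.L2Operator
open Filter Topology MeasureTheory

namespace APGeom
noncomputable section

abbrev E2 := EuclideanSpace ℝ (Fin 2)
abbrev M2 := Matrix (Fin 2) (Fin 2) ℝ

/-- matrix acting on Euclidean plane -/
def mv (A : M2) (x : E2) : E2 := (WithLp.equiv 2 _).symm (A.mulVec ((WithLp.equiv 2 _) x))

lemma mv_eq_clm (A : M2) (x : E2) : mv A x = Matrix.toEuclideanCLM (𝕜 := ℝ) A x := rfl

lemma norm_eq_clm (A : M2) : ‖A‖ = ‖(Matrix.toEuclideanCLM (𝕜 := ℝ) A : E2 →L[ℝ] E2)‖ := rfl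

lemma mv_apply (A : M2) (x : E2) (i : Fin 2) : mv A x i = A i 0 * x 0 + A i 1 * x 1 := by
  fin_cases i <;> simp [mv, Matrix.mulVec, dotProduct, Fin.sum_univ_two]

lemma mv_mul (A B : M2) (x : E2) : mv (A * B) x = mv A (mv B x) := by
  simp only [mv, Equiv.apply_symm_apply, Matrix.mulVec_mulVec]

lemma mv_one (x : E2) : mv 1 x = x := by
  simp [mv]

lemma norm_mv_le (A : M2) (x : E2) : ‖mv A x‖ ≤ ‖A‖ * ‖x‖ := by
  rw [mv_eq_clm, norm_eq_clm]
  exact (Matrix.toEuclideanCLM (𝕜 := ℝ) A : E2 →L[ℝ] E2).le_opNorm x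

lemma opNorm_le (A : M2) {C : ℝ} (hC : 0 ≤ C) (h : ∀ x : E2, ‖mv A x‖ ≤ C * ‖x‖) :
    ‖A‖ ≤ C := by
  rw [norm_eq_clm]
  exact ContinuousLinearMap.opNorm_le_bound _ hC (fun x => by rw [← mv_eq_clm]; exact h x)

lemma norm_sq (x : E2) : ‖x‖ ^ 2 = x 0 ^ 2 + x 1 ^ 2 := by
  rw [EuclideanSpace.norm_eq, Real.sq_sqrt (by positivity)]
  simp [Fin.sum_univ_two, sq_abs]

lemma norm_eq_of_sq (x y : E2) (h : x 0 ^2 + x 1 ^2 = y 0 ^2 + y 1 ^2) : ‖x‖ = ‖y‖ := by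
  have h1 := norm_sq x
  have h2 := norm_sq y
  nlinarith [norm_nonneg x, norm_nonneg y]

/-- auxiliary vector from coordinates -/
def vec (a b : ℝ) : E2 := (WithLp.equiv 2 _).symm ![a, b]

@[simp] lemma vec_apply0 (a b : ℝ) : vec a b 0 = a := rfl
@[simp] lemma vec_apply1 (a b : ℝ) : vec a b 1 = b := rfl

lemma exists_norm_one : ∃ x : E2, ‖x‖ = 1 := by
  refine ⟨vec 1 0, ?_⟩
  have : ‖vec 1 0‖ ^ 2 = 1 := by rw [norm_sq]; norm_num
  nlinarith [norm_nonneg (vec 1 0)]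

/-- the operator norm is attained on the unit sphere -/
lemma exists_max (A : M2) : ∃ x : E2, ‖x‖ = 1 ∧ ‖mv A x‖ = ‖A‖ := by
  have hS : IsCompact (Metric.sphere (0 : E2) 1) := isCompact_sphere _ _
  obtain ⟨x₀, hx₀⟩ := exists_norm_one
  have hx₀S : x₀ ∈ Metric.sphere (0 : E2) 1 := by simpa [mem_sphere_zero_iff_norm] using hx₀
  have hcont : Continuous fun x : E2 => ‖mv A x‖ := by
    have : Continuous fun x : E2 => mv A x := by
      simp only [mv_eq_clm]; exact (Matrix.toEuclideanCLM (𝕜 := ℝ) A : E2 →L[ℝ] E2).continuous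
    exact this.norm
  obtain ⟨z, hzS, hz⟩ := hS.exists_isMaxOn ⟨x₀, hx₀S⟩ hcont.continuousOn
  have hz1 : ‖z‖ = 1 := by simpa [mem_sphere_zero_iff_norm] using hzS
  refine ⟨z, hz1, le_antisymm ?_ ?_⟩
  · calc ‖mv A z‖ ≤ ‖A‖ * ‖z‖ := norm_mv_le A z
    _ = ‖A‖ := by rw [hz1, mul_one]
  · refine opNorm_le A (norm_nonneg _) fun x => ?_
    rcases eq_or_ne x 0 with rfl | hx
    · have : mv A (0 : E2) = 0 := by
        rw [mv_eq_clm]; exact map_zero _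
      simp [this]
    · have hxn : (0:ℝ) < ‖x‖ := norm_pos_iff.2 hx
      have hu : (‖x‖⁻¹ • x) ∈ Metric.sphere (0 : E2) 1 := by
        simp [mem_sphere_zero_iff_norm, norm_smul, abs_of_pos (inv_pos.2 hxn),
          inv_mul_cancel₀ hxn.ne']
      have := hz hu
      have hmv : mv A (‖x‖⁻¹ • x) = ‖x‖⁻¹ • mv A x := by
        simp only [mv_eq_clm]; exact map_smul _ _ _
      have h2 : ‖mv A (‖x‖⁻¹ • x)‖ = ‖x‖⁻¹ * ‖mv A x‖ := by
        rw [hmv, norm_smul, Real.norm_eq_abs, abs_of_pos (inv_pos.2 hxn)]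
      simp only [Set.mem_setOf_eq] at this
      have h3 : ‖x‖⁻¹ * ‖mv A x‖ ≤ ‖mv A z‖ := by rw [← h2]; exact this
      calc ‖mv A x‖ = ‖x‖ * (‖x‖⁻¹ * ‖mv A x‖) := by field_simp
      _ ≤ ‖x‖ * ‖mv A z‖ := by nlinarith [hxn]
      _ = ‖mv A z‖ * ‖x‖ := by ring

def Dd (x y : E2) : ℝ := x 0 * y 1 - x 1 * y 0
/-- inner product -/
def ip (x y : E2) : ℝ := x 0 * y 0 + x 1 * y 1

lemma lagrange (x y : E2) : Dd x y ^ 2 + ip x y ^ 2 = ‖x‖^2 * ‖y‖^2 := by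
  rw [norm_sq, norm_sq]; unfold Dd ip; ring

lemma abs_le_of_sq_le {t s : ℝ} (hs : 0 ≤ s) (h : t^2 ≤ s^2) : |t| ≤ s := by
  have h1 : |t| = Real.sqrt (t^2) := (Real.sqrt_sq_eq_abs t).symm
  have h2 : Real.sqrt (t^2) ≤ Real.sqrt (s^2) := Real.sqrt_le_sqrt h
  rw [Real.sqrt_sq hs] at h2
  linarith [h1 ▸ h2]

lemma abs_Dd_le (x y : E2) : |Dd x y| ≤ ‖x‖ * ‖y‖ := by
  refine abs_le_of_sq_le (by positivity) ?_
  have h := lagrange x y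
  nlinarith [sq_nonneg (ip x y)]

lemma abs_ip_le (x y : E2) : |ip x y| ≤ ‖x‖ * ‖y‖ := by
  refine abs_le_of_sq_le (by positivity) ?_
  have h := lagrange x y
  nlinarith [sq_nonneg (Dd x y)]

lemma Dd_mv (A : M2) (hA : A.det = 1) (x y : E2) : Dd (mv A x) (mv A y) = Dd x y := by
  have hd : A 0 0 * A 1 1 - A 0 1 * A 1 0 = 1 := by
    rw [← Matrix.det_fin_two]; exact hA
  unfold Dd
  rw [mv_apply, mv_apply, mv_apply, mv_apply]
  linear_combination (x 0 * y 1 - x 1 * y 0) * hd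

lemma Dd_transfer (a b u : E2) : Dd a b * ‖u‖^2 = Dd a u * ip u b + ip a u * Dd u b := by
  rw [norm_sq]; unfold Dd ip; ring

/-- decomposition in the basis v, v⊥ -/
lemma decomp (v y : E2) (hv : ‖v‖ = 1) :
    y = ip v y • v + Dd v y • vec (-(v 1)) (v 0) := by
  have hv2 : v 0 ^2 + v 1 ^2 = 1 := by rw [← norm_sq, hv]; norm_num
  have h0 : y 0 = (ip v y • v + Dd v y • vec (-(v 1)) (v 0)) 0 := by
    have : (ip v y • v + Dd v y • vec (-(v 1)) (v 0)) 0
        = ip v y * v 0 + Dd v y * (-(v 1)) := rfl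
    rw [this]; unfold ip Dd; linear_combination (- y 0) * hv2
  have h1 : y 1 = (ip v y • v + Dd v y • vec (-(v 1)) (v 0)) 1 := by
    have : (ip v y • v + Dd v y • vec (-(v 1)) (v 0)) 1
        = ip v y * v 1 + Dd v y * (v 0) := rfl
    rw [this]; unfold ip Dd; linear_combination (- y 1) * hv2
  ext i
  fin_cases i
  · exact h0
  · exact h1


lemma mv_add (A : M2) (x y : E2) : mv A (x + y) = mv A x + mv A y := by
  simp only [mv_eq_clm]; exact map_add _ _ _

lemma mv_smul (A : M2) (c : ℝ) (x : E2) : mv A (c • x) = c • mv A x := by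
  simp only [mv_eq_clm]; exact map_smul _ _ _

lemma norm_vec_swap (x : E2) : ‖vec (x 1) (-(x 0))‖ = ‖x‖ := by
  apply norm_eq_of_sq; simp only [vec_apply0, vec_apply1]; ring

lemma contract_bound (A : M2) (v y : E2) (hv : ‖v‖ = 1) :
    ‖mv A y‖ ≤ |ip v y| * ‖mv A v‖ + |Dd v y| * ‖A‖ := by
  have hperp : ‖vec (-(v 1)) (v 0)‖ = 1 := by
    rw [← hv]
    apply norm_eq_of_sq; simp only [vec_apply0, vec_apply1]; ring
  calc ‖mv A y‖ = ‖mv A (ip v y • v + Dd v y • vec (-(v 1)) (v 0))‖ := by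
        rw [← decomp v y hv]
    _ = ‖ip v y • mv A v + Dd v y • mv A (vec (-(v 1)) (v 0))‖ := by
        rw [mv_add, mv_smul, mv_smul]
    _ ≤ ‖ip v y • mv A v‖ + ‖Dd v y • mv A (vec (-(v 1)) (v 0))‖ := norm_add_le _ _
    _ ≤ |ip v y| * ‖mv A v‖ + |Dd v y| * ‖A‖ := by
        rw [norm_smul, norm_smul, Real.norm_eq_abs, Real.norm_eq_abs]
        have h2 : ‖mv A (vec (-(v 1)) (v 0))‖ ≤ ‖A‖ := by
          calc ‖mv A (vec (-(v 1)) (v 0))‖ ≤ ‖A‖ * ‖vec (-(v 1)) (v 0)‖ := norm_mv_le _ _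
          _ = ‖A‖ := by rw [hperp, mul_one]
        have := abs_nonneg (Dd v y)
        nlinarith [abs_nonneg (ip v y), norm_nonneg (mv A v)]

lemma norm_transpose (A : M2) : ‖Matrix.transpose A‖ = ‖A‖ := by
  have h : A.conjTranspose = Matrix.transpose A := by
    ext i j; simp [Matrix.conjTranspose_apply]
  rw [← h]; exact Matrix.l2_opNorm_conjTranspose A

lemma norm_adjugate_le (A : M2) : ‖A.adjugate‖ ≤ ‖A‖ := by
  refine opNorm_le _ (norm_nonneg _) fun x => ?_
  have hadj : A.adjugate = !![A 1 1, -(A 0 1); -(A 1 0), A 0 0] :=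
    Matrix.adjugate_fin_two A
  have key : ‖mv A.adjugate x‖ = ‖mv (Matrix.transpose A) (vec (x 1) (-(x 0)))‖ := by
    apply norm_eq_of_sq
    rw [mv_apply, mv_apply, mv_apply, mv_apply]
    rw [hadj]
    simp [Matrix.transpose_apply]
    ring
  rw [key]
  calc ‖mv (Matrix.transpose A) (vec (x 1) (-(x 0)))‖ ≤ ‖Matrix.transpose A‖ * ‖vec (x 1) (-(x 0))‖ := norm_mv_le _ _
  _ = ‖A‖ * ‖x‖ := by rw [norm_transpose, norm_vec_swap]

lemma adjugate_adjugate2 (A : M2) : A.adjugate.adjugate = A := by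
  rw [Matrix.adjugate_fin_two A]
  rw [Matrix.adjugate_fin_two]
  simp
  exact (Matrix.etaExpand_eq A)

lemma norm_adjugate (A : M2) : ‖A.adjugate‖ = ‖A‖ := by
  refine le_antisymm (norm_adjugate_le A) ?_
  have := norm_adjugate_le A.adjugate
  rwa [adjugate_adjugate2] at this

lemma adj_mul (A : M2) (hA : A.det = 1) : A.adjugate * A = 1 := by
  rw [Matrix.adjugate_mul, hA, one_smul]

lemma mul_adj (A : M2) (hA : A.det = 1) : A * A.adjugate = 1 := by
  rw [Matrix.mul_adjugate, hA, one_smul]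

lemma one_le_norm (A : M2) (hA : A.det = 1) : 1 ≤ ‖A‖ := by
  obtain ⟨x, hx1⟩ := exists_norm_one
  have h1 : x = mv A.adjugate (mv A x) := by
    rw [← mv_mul, adj_mul A hA, mv_one]
  have h2 : ‖x‖ ≤ ‖A‖ * (‖A‖ * ‖x‖) := by
    calc ‖x‖ = ‖mv A.adjugate (mv A x)‖ := by rw [← h1]
    _ ≤ ‖A.adjugate‖ * ‖mv A x‖ := norm_mv_le _ _
    _ ≤ ‖A‖ * (‖A‖ * ‖x‖) := by
        rw [norm_adjugate]
        have := norm_mv_le A x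
        nlinarith [norm_nonneg A]
  rw [hx1] at h2
  nlinarith [norm_nonneg A]

lemma norm_one_M2 : ‖(1 : M2)‖ = 1 := by
  refine le_antisymm ?_ (one_le_norm 1 (by simp))
  refine opNorm_le 1 zero_le_one fun x => ?_
  rw [mv_one, one_mul]

lemma exists_min (A : M2) (hA : A.det = 1) :
    ∃ v : E2, ‖v‖ = 1 ∧ ‖mv A v‖ * ‖A‖ = 1 := by
  have hA1 : 1 ≤ ‖A‖ := one_le_norm A hA
  have hA0 : (0:ℝ) < ‖A‖ := by linarith
  obtain ⟨u, hu1, humax⟩ := exists_max A.adjugate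
  rw [norm_adjugate] at humax
  refine ⟨‖A‖⁻¹ • mv A.adjugate u, ?_, ?_⟩
  · rw [norm_smul, Real.norm_eq_abs, abs_of_pos (inv_pos.2 hA0), humax,
      inv_mul_cancel₀ hA0.ne']
  · rw [mv_smul, ← mv_mul, mul_adj A hA, mv_one, norm_smul, Real.norm_eq_abs,
      abs_of_pos (inv_pos.2 hA0), hu1, mul_one, inv_mul_cancel₀ hA0.ne']

lemma mv_zero (A : M2) : mv A (0 : E2) = 0 := by
  simp only [mv_eq_clm]; exact map_zero _

-- pure arithmetic helpers

lemma r_cb2 {c M b : ℝ} (hc0 : 0 < c) (hc1 : c ≤ 1) (h12 : 12 ≤ c^3*M^2) (hM0 : 0 < M)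
    (hMb : M ≤ b) : 12 ≤ c * b^2 := by
  have hc2 : c^2 ≤ 1 := by nlinarith
  have h1 : c^3 * M^2 ≤ c * M^2 := by
    nlinarith [mul_nonneg (mul_nonneg hc0.le (sq_nonneg M)) (sub_nonneg.2 hc2)]
  have h2 : c * M^2 ≤ c * b^2 := by
    have : M^2 ≤ b^2 := by nlinarith
    nlinarith
  linarith

lemma r_c2a2 {c M a : ℝ} (hc0 : 0 < c) (hc1 : c ≤ 1) (h12 : 12 ≤ c^3*M^2) (hM0 : 0 < M)
    (hMa : M ≤ a) : 12 ≤ c^2 * a^2 := by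
  have h1 : c^3 * M^2 ≤ c^2 * M^2 := by
    nlinarith [mul_nonneg (mul_nonneg (sq_nonneg c) (sq_nonneg M)) (sub_nonneg.2 hc1)]
  have h2 : c^2 * M^2 ≤ c^2 * a^2 := by
    have : M^2 ≤ a^2 := by nlinarith
    nlinarith [sq_nonneg c]
  linarith

-- |Dd v Gw| ≥ (11/12) c a from the contraction estimate (multiplied through by b)
lemma r_D1 {c a b G D1 : ℝ} (hc0 : 0 < c) (ha0 : 0 < a) (hb0 : 0 < b)
    (hcb2 : 12 ≤ c * b^2) (hGa : G ≤ a)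
    (hkey : c * (b * a) * b ≤ G + D1 * b^2) : (11/12) * (c * a) ≤ D1 := by
  have h1 : c * a * b^2 - a ≤ D1 * b^2 := by nlinarith
  have h2 : a ≤ (1/12) * (c * a * b^2) := by nlinarith
  have h3 : (11/12) * (c * a) * b^2 ≤ D1 * b^2 := by nlinarith
  have hb2 : 0 < b^2 := by positivity
  nlinarith

lemma r_P {G Z X P : ℝ} (hG0 : 0 < G) (hZ0 : 0 < Z) (hX : 0 ≤ X) (hP0 : 0 ≤ P)
    (h3 : 3 * X ≤ G * Z) (hPsq : G^2 * Z^2 ≤ P^2 + X^2) : (9/10) * (G * Z) ≤ P := by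
  have hGZ : 0 < G * Z := mul_pos hG0 hZ0
  have hX2 : X^2 ≤ (G*Z)^2 / 9 := by nlinarith
  have hP2 : (81/100) * (G*Z)^2 ≤ P^2 := by nlinarith
  nlinarith [sq_nonneg (P - (9/10)*(G*Z)), sq_nonneg (P + (9/10)*(G*Z))]

lemma r_final {c a G Z X D1 P Dvz : ℝ} (hc0 : 0 < c) (ha0 : 0 < a)
    (hG0 : 0 < G) (hZ0 : 0 < Z) (hX : 0 ≤ X)
    (hGa : G ≤ a) (hGc : c * a ≤ G)
    (hc2a2 : 12 ≤ c^2 * a^2)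
    (hXZ : c * (a * X) ≤ 4 * Z)
    (hD1 : (11/12) * (c * a) ≤ D1)
    (hP : (9/10) * (G * Z) ≤ P) (hP0 : 0 ≤ P) (hD10 : 0 ≤ D1)
    (htr : D1 * P - G * X ≤ Dvz * G^2) : c/4 * Z ≤ Dvz := by
  -- X ≤ (1/3) c a Z
  have hX3 : 3 * X ≤ c * a * Z := by
    nlinarith [mul_le_mul_of_nonneg_left hXZ (mul_pos hc0 ha0).le]
  -- D1 * P ≥ (33/40) c a G Z
  have hD1P : (33/40) * (c * a) * (G * Z) ≤ D1 * P := by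
    nlinarith [mul_pos hG0 hZ0]
  -- numerator bound: (33/40) c a G Z - G X ≥ (c/4) Z G^2
  have hnum : c/4 * Z * G^2 ≤ (33/40) * (c * a) * (G * Z) - G * X := by
    have h1 : G * X ≤ (1/3) * (c * a) * (G * Z) := by
      nlinarith [mul_le_mul_of_nonneg_left hX3 hG0.le]
    have h2 : c/4 * Z * G^2 ≤ (1/4) * (c * a) * (G * Z) := by
      nlinarith [mul_pos (mul_pos hc0 hZ0) hG0]
    nlinarith [mul_pos hG0 hZ0, mul_pos hc0 (mul_pos ha0 (mul_pos hG0 hZ0))]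
  have : c/4 * Z * G^2 ≤ Dvz * G^2 := by linarith
  have hG2 : 0 < G^2 := by positivity
  nlinarith


lemma r_XGZ {c a G Z X : ℝ} (hc0 : 0 < c) (ha0 : 0 < a) (hX : 0 ≤ X)
    (hGc : c*a ≤ G) (hx : c/4*(a*X) ≤ Z) (hc2a2 : 12 ≤ c^2*a^2) : 3*X ≤ G*Z := by
  have h1 : (c*a) * (c/4*(a*X)) ≤ G * Z := by
    apply mul_le_mul hGc hx (by nlinarith [mul_nonneg ha0.le hX]) (by nlinarith [mul_pos hc0 ha0])
  nlinarith

set_option maxHeartbeats 1000000 in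
lemma ap_step (g h : M2) (hg : g.det = 1) (hh : h.det = 1) (c M : ℝ)
    (hc0 : 0 < c) (hc1 : c ≤ 1) (h12 : 12 ≤ c^3 * M^2) (hM0 : 0 < M)
    (hgM : M ≤ ‖g‖) (hhM : M ≤ ‖h‖)
    (hj : c * (‖h‖ * ‖g‖) ≤ ‖h * g‖)
    (x : E2) (hx : c/4 * (‖g‖ * ‖x‖) ≤ ‖mv g x‖) :
    c/4 * (‖h‖ * ‖mv g x‖) ≤ ‖mv h (mv g x)‖ := by
  rcases eq_or_ne x 0 with rfl | hx0
  · rw [mv_zero, mv_zero, norm_zero]; simp [mv_zero]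
  have hX0 : 0 < ‖x‖ := norm_pos_iff.2 hx0
  have ha0 : 0 < ‖g‖ := lt_of_lt_of_le hM0 hgM
  have hb0 : 0 < ‖h‖ := lt_of_lt_of_le hM0 hhM
  have hZ0 : 0 < ‖mv g x‖ := by
    refine lt_of_lt_of_le ?_ hx
    have := mul_pos ha0 hX0
    nlinarith
  have hcb2 : 12 ≤ c * ‖h‖^2 := r_cb2 hc0 hc1 h12 hM0 hhM
  have hc2a2 : 12 ≤ c^2 * ‖g‖^2 := r_c2a2 hc0 hc1 h12 hM0 hgM
  obtain ⟨v, hv1, hvm⟩ := exists_min h hh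
  obtain ⟨w, hw1, hwm⟩ := exists_max (h * g)
  have hbGw : ‖mv h (mv g w)‖ = ‖h * g‖ := by rw [← mv_mul]; exact hwm
  have hGa : ‖mv g w‖ ≤ ‖g‖ := by
    have := norm_mv_le g w
    rwa [hw1, mul_one] at this
  have hGc : c * ‖g‖ ≤ ‖mv g w‖ := by
    have h1 : ‖mv h (mv g w)‖ ≤ ‖h‖ * ‖mv g w‖ := norm_mv_le h _
    have h2 : ‖h‖ * (c * ‖g‖) ≤ ‖h‖ * ‖mv g w‖ := by rw [← hbGw] at hj; linarith
    exact le_of_mul_le_mul_left h2 hb0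
  have hG0 : 0 < ‖mv g w‖ := lt_of_lt_of_le (by positivity) hGc
  have hipvGw : |ip v (mv g w)| ≤ ‖mv g w‖ := by
    have := abs_ip_le v (mv g w)
    rwa [hv1, one_mul] at this
  -- lower bound on |Dd v (mv g w)|
  have hD1 : (11/12) * (c * ‖g‖) ≤ |Dd v (mv g w)| := by
    have hcb := contract_bound h v (mv g w) hv1
    have h3 : c * (‖h‖ * ‖g‖) ≤ |ip v (mv g w)| * ‖mv h v‖ + |Dd v (mv g w)| * ‖h‖ := by
      rw [← hbGw] at hj; linarith
    have h4 := mul_le_mul_of_nonneg_right h3 hb0.le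
    have h5 : (|ip v (mv g w)| * ‖mv h v‖ + |Dd v (mv g w)| * ‖h‖) * ‖h‖
        = |ip v (mv g w)| * (‖mv h v‖ * ‖h‖) + |Dd v (mv g w)| * ‖h‖^2 := by ring
    rw [h5, hvm, mul_one] at h4
    exact r_D1 hc0 ha0 hb0 hcb2 hGa (by linarith)
  -- alignment
  have hDz : |Dd (mv g w) (mv g x)| ≤ ‖x‖ := by
    rw [Dd_mv g hg]
    have := abs_Dd_le w x
    rwa [hw1, one_mul] at this
  have hPsq : ‖mv g w‖^2 * ‖mv g x‖^2 ≤ |ip (mv g w) (mv g x)|^2 + ‖x‖^2 := by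
    have hl := lagrange (mv g w) (mv g x)
    have h5 : Dd (mv g w) (mv g x) ^ 2 ≤ ‖x‖^2 := by
      rw [← sq_abs]; exact pow_le_pow_left₀ (abs_nonneg _) hDz 2
    have h6 := sq_abs (ip (mv g w) (mv g x))
    linarith
  have hXGZ : 3 * ‖x‖ ≤ ‖mv g w‖ * ‖mv g x‖ := r_XGZ hc0 ha0 (norm_nonneg x) hGc hx hc2a2
  have hP : (9/10) * (‖mv g w‖ * ‖mv g x‖) ≤ |ip (mv g w) (mv g x)| :=
    r_P hG0 hZ0 (norm_nonneg x) (abs_nonneg _) hXGZ hPsq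
  -- transfer
  have htr : |Dd v (mv g w)| * |ip (mv g w) (mv g x)| - ‖mv g w‖ * ‖x‖
      ≤ |Dd v (mv g x)| * ‖mv g w‖^2 := by
    have hid := Dd_transfer v (mv g x) (mv g w)
    have habs : |Dd v (mv g w) * ip (mv g w) (mv g x)|
        - |ip v (mv g w) * Dd (mv g w) (mv g x)| ≤ |Dd v (mv g x) * ‖mv g w‖^2| := by
      rw [hid]
      have h7 := abs_add_le (Dd v (mv g w) * ip (mv g w) (mv g x)
        + ip v (mv g w) * Dd (mv g w) (mv g x)) (-(ip v (mv g w) * Dd (mv g w) (mv g x)))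
      simp only [add_neg_cancel_right, abs_neg] at h7
      linarith
    rw [abs_mul, abs_mul, abs_mul, abs_of_nonneg (sq_nonneg ‖mv g w‖)] at habs
    have h8 : |ip v (mv g w)| * |Dd (mv g w) (mv g x)| ≤ ‖mv g w‖ * ‖x‖ :=
      mul_le_mul hipvGw hDz (abs_nonneg _) hG0.le
    linarith
  have hDvzZ : c/4 * ‖mv g x‖ ≤ |Dd v (mv g x)| :=
    r_final hc0 ha0 hG0 hZ0 (norm_nonneg x) hGa hGc hc2a2 (by linarith) hD1 hP
      (abs_nonneg _) (abs_nonneg _) htr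
  -- expansion by h
  have hfinal : |Dd v (mv g x)| * ‖h‖ ≤ ‖mv h (mv g x)‖ := by
    have h9 : |Dd (mv h v) (mv h (mv g x))| = |Dd v (mv g x)| := by rw [Dd_mv h hh]
    have h10 : |Dd (mv h v) (mv h (mv g x))| ≤ ‖mv h v‖ * ‖mv h (mv g x)‖ := abs_Dd_le _ _
    rw [h9] at h10
    have h11 := mul_le_mul_of_nonneg_right h10 hb0.le
    calc |Dd v (mv g x)| * ‖h‖ ≤ ‖mv h v‖ * ‖mv h (mv g x)‖ * ‖h‖ := h11
    _ = ‖mv h (mv g x)‖ * (‖mv h v‖ * ‖h‖) := by ring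
    _ = ‖mv h (mv g x)‖ := by rw [hvm, mul_one]
  have h12' := mul_le_mul_of_nonneg_right hDvzZ hb0.le
  calc c/4 * (‖h‖ * ‖mv g x‖) = c/4 * ‖mv g x‖ * ‖h‖ := by ring
  _ ≤ |Dd v (mv g x)| * ‖h‖ := h12'
  _ ≤ ‖mv h (mv g x)‖ := hfinal

end
end APGeom
namespace APCoc
open APGeom
noncomputable section

variable {Ω : Type*} (T : Ω → Ω) (A : Ω → SL2)

/-- coercion of the cocycle to matrices -/
def cm (n : ℕ) (ω : Ω) : M2 := ((coc T A n ω : SL2) : M2)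

lemma cm_det (n : ℕ) (ω : Ω) : (cm T A n ω).det = 1 := (coc T A n ω).property

lemma cm_zero (ω : Ω) : cm T A 0 ω = 1 := by
  simp [cm, coc]

lemma cm_one (ω : Ω) : cm T A 1 ω = ((A ω : SL2) : M2) := by
  simp [cm, coc]

lemma norm_coe_pos (g : SL2) : 0 < ‖(g : M2)‖ :=
  lt_of_lt_of_le one_pos (APGeom.one_le_norm _ g.property)

lemma coc_add (m n : ℕ) (ω : Ω) :
    coc T A (m + n) ω = coc T A m (T^[n] ω) * coc T A n ω := by
  induction n generalizing ω with
  | zero => simp [coc]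
  | succ n ih =>
    have h1 : m + (n + 1) = (m + n) + 1 := by ring
    rw [h1]
    show coc T A (m + n) (T ω) * A ω = _
    rw [ih (T ω)]
    rw [Function.iterate_succ_apply]
    show _ = coc T A m (T^[n] (T ω)) * (coc T A n (T ω) * A ω)
    rw [mul_assoc]

lemma cm_add (m n : ℕ) (ω : Ω) :
    cm T A (m + n) ω = cm T A m (T^[n] ω) * cm T A n ω := by
  rw [cm, coc_add]
  rfl

lemma one_le_norm_cm (n : ℕ) (ω : Ω) : 1 ≤ ‖cm T A n ω‖ :=
  APGeom.one_le_norm _ (cm_det T A n ω)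

lemma norm_cm_pos (n : ℕ) (ω : Ω) : 0 < ‖cm T A n ω‖ :=
  lt_of_lt_of_le one_pos (one_le_norm_cm T A n ω)

lemma cocNorm_eq (n : ℕ) (ω : Ω) : cocNorm T A n ω = Real.log ‖cm T A n ω‖ := rfl

lemma cocNorm_nonneg (n : ℕ) (ω : Ω) : 0 ≤ cocNorm T A n ω :=
  Real.log_nonneg (one_le_norm_cm T A n ω)

lemma cocNorm_subadd (m n : ℕ) (ω : Ω) :
    cocNorm T A (m + n) ω ≤ cocNorm T A m (T^[n] ω) + cocNorm T A n ω := by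
  rw [cocNorm_eq, cocNorm_eq, cocNorm_eq]
  have h1 : ‖cm T A (m+n) ω‖ ≤ ‖cm T A m (T^[n] ω)‖ * ‖cm T A n ω‖ := by
    rw [cm_add]; exact Matrix.l2_opNorm_mul _ _
  calc Real.log ‖cm T A (m+n) ω‖
      ≤ Real.log (‖cm T A m (T^[n] ω)‖ * ‖cm T A n ω‖) :=
        Real.log_le_log (norm_cm_pos T A _ ω) h1
  _ = _ := Real.log_mul (norm_cm_pos T A m _).ne' (norm_cm_pos T A n ω).ne'

/-- the avalanche-principle chain bound -/
lemma ap_chain (ℓ : ℕ) (c M : ℝ)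
    (hc0 : 0 < c) (hc1 : c ≤ 1) (h12 : 12 ≤ c^3 * M^2) (hM0 : 0 < M)
    (hblock : ∀ ρ : Ω, M ≤ ‖cm T A ℓ ρ‖)
    (hjunc : ∀ ρ : Ω, c * (‖cm T A ℓ (T^[ℓ] ρ)‖ * ‖cm T A ℓ ρ‖) ≤ ‖cm T A (2*ℓ) ρ‖) :
    ∀ q : ℕ, 1 ≤ q → ∀ ω : Ω, (c/4)^(q-1) * M^q ≤ ‖cm T A (q*ℓ) ω‖ := by
  have hc40 : (0:ℝ) ≤ c/4 := by linarith
  have key : ∀ q : ℕ, 1 ≤ q → ∀ ω : Ω, ∃ x : E2, ‖x‖ = 1 ∧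
      c/4 * (‖cm T A ℓ (T^[(q-1)*ℓ] ω)‖ * ‖mv (cm T A ((q-1)*ℓ) ω) x‖)
        ≤ ‖mv (cm T A (q*ℓ) ω) x‖ ∧
      (c/4)^(q-1) * M^q ≤ ‖mv (cm T A (q*ℓ) ω) x‖ := by
    intro q
    induction q with
    | zero => intro h; omega
    | succ q ih =>
      intro _ ω
      simp only [Nat.add_sub_cancel]
      rcases Nat.eq_zero_or_pos q with rfl | hq1
      · -- base case: one block
        obtain ⟨x, hx1, hxmax⟩ := exists_max (cm T A ℓ ω)
        have e0 : (0:ℕ) * ℓ = 0 := Nat.zero_mul ℓ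
        have e1 : (0+1) * ℓ = ℓ := by omega
        rw [e0, e1]
        refine ⟨x, hx1, ?_, ?_⟩
        · rw [Function.iterate_zero_apply, cm_zero, mv_one, hx1, mul_one, hxmax]
          nlinarith [norm_nonneg (cm T A ℓ ω)]
        · rw [pow_zero, pow_one, one_mul, hxmax]
          exact hblock ω
      · -- inductive step
        obtain ⟨x, hx1, hinv, hcum⟩ := ih hq1 ω
        have e : q*ℓ = ℓ + (q-1)*ℓ := by
          conv_lhs => rw [show q = 1 + (q-1) from by omega]
          rw [Nat.add_mul, Nat.one_mul]
        have e2 : (q+1)*ℓ = ℓ + q*ℓ := by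
          rw [Nat.add_mul, Nat.one_mul, Nat.add_comm]
        have hA : cm T A (q*ℓ) ω = cm T A ℓ (T^[(q-1)*ℓ] ω) * cm T A ((q-1)*ℓ) ω := by
          rw [e, cm_add]
        have hidA : mv (cm T A (q*ℓ) ω) x
            = mv (cm T A ℓ (T^[(q-1)*ℓ] ω)) (mv (cm T A ((q-1)*ℓ) ω) x) := by
          rw [hA, mv_mul]
        have hC : cm T A ((q+1)*ℓ) ω = cm T A ℓ (T^[q*ℓ] ω) * cm T A (q*ℓ) ω := by
          rw [e2, cm_add]
        have hidC : mv (cm T A ((q+1)*ℓ) ω) x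
            = mv (cm T A ℓ (T^[q*ℓ] ω)) (mv (cm T A (q*ℓ) ω) x) := by
          rw [hC, mv_mul]
        have hiter : T^[ℓ] (T^[(q-1)*ℓ] ω) = T^[q*ℓ] ω := by
          rw [← Function.iterate_add_apply, ← e]
        have hjunc2 : c * (‖cm T A ℓ (T^[q*ℓ] ω)‖ * ‖cm T A ℓ (T^[(q-1)*ℓ] ω)‖)
            ≤ ‖cm T A ℓ (T^[q*ℓ] ω) * cm T A ℓ (T^[(q-1)*ℓ] ω)‖ := by
          have hmul : cm T A ℓ (T^[q*ℓ] ω) * cm T A ℓ (T^[(q-1)*ℓ] ω)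
              = cm T A (2*ℓ) (T^[(q-1)*ℓ] ω) := by
            rw [two_mul, cm_add, hiter]
          rw [hmul]
          have := hjunc (T^[(q-1)*ℓ] ω)
          rwa [hiter] at this
        have hstepin : c/4 * (‖cm T A ℓ (T^[(q-1)*ℓ] ω)‖ * ‖mv (cm T A ((q-1)*ℓ) ω) x‖)
            ≤ ‖mv (cm T A ℓ (T^[(q-1)*ℓ] ω)) (mv (cm T A ((q-1)*ℓ) ω) x)‖ := by
          rw [← hidA]; exact hinv
        have step := ap_step (cm T A ℓ (T^[(q-1)*ℓ] ω)) (cm T A ℓ (T^[q*ℓ] ω))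
          (cm_det T A ℓ _) (cm_det T A ℓ _) c M hc0 hc1 h12 hM0
          (hblock _) (hblock _) hjunc2 (mv (cm T A ((q-1)*ℓ) ω) x) hstepin
        rw [← hidA, ← hidC] at step
        refine ⟨x, hx1, step, ?_⟩
        have epow : (c/4)^q = (c/4)^(q-1) * (c/4) := by
          rw [← pow_succ]
          congr 1
          omega
        have hnn : (0:ℝ) ≤ (c/4)^(q-1) * M^q :=
          mul_nonneg (pow_nonneg hc40 _) (pow_nonneg hM0.le _)
        have t1 : M * ((c/4)^(q-1) * M^q) ≤ ‖cm T A ℓ (T^[q*ℓ] ω)‖ * ‖mv (cm T A (q*ℓ) ω) x‖ :=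
          mul_le_mul (hblock _) hcum hnn (le_trans hM0.le (hblock _))
        have t2 := mul_le_mul_of_nonneg_left t1 hc40
        have t3 : (c/4) * (M * ((c/4)^(q-1) * M^q)) = (c/4)^q * M^(q+1) := by
          rw [epow, pow_succ]
          ring
        calc (c/4)^q * M^(q+1) = (c/4) * (M * ((c/4)^(q-1) * M^q)) := t3.symm
        _ ≤ c/4 * (‖cm T A ℓ (T^[q*ℓ] ω)‖ * ‖mv (cm T A (q*ℓ) ω) x‖) := t2
        _ ≤ ‖mv (cm T A ((q+1)*ℓ) ω) x‖ := step
  intro q hq ω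
  obtain ⟨x, hx1, _, hbound⟩ := key q hq ω
  calc (c/4)^(q-1) * M^q ≤ ‖mv (cm T A (q*ℓ) ω) x‖ := hbound
  _ ≤ ‖cm T A (q*ℓ) ω‖ := by
      have := norm_mv_le (cm T A (q*ℓ) ω) x
      rwa [hx1, mul_one] at this

end
end APCoc

set_option maxHeartbeats 2000000 in
/-- Proposition 4.4Var_n(A) = 0`, where
`Var_n(A) = sup_{E,ω,ϱ} |log‖A_n(E,ω)‖ - log‖A_n(E,ϱ)‖|`, then `A(E,·)` is
uniform for every `E ∈ I`. -/
theorem prop_inclusion_two {Ω : Type*} [MetricSpace Ω] [CompactSpace Ω]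
    (T : Ω ≃ₜ Ω) (I : Set ℝ) (hIc : IsCompact I) (hI : I.OrdConnected)
    (A : C(I × Ω, SL2))
    (hV : ∀ δ > (0 : ℝ), ∀ N : ℕ, ∃ n ≥ N, ∀ (E : I) (ω ϱ : Ω),
      (1 / n : ℝ) * |cocNorm (⇑T) (fun ω' => A (E, ω')) n ω
        - cocNorm (⇑T) (fun ω' => A (E, ω')) n ϱ| < δ) :
    ∀ E : I, IsUniformCocycle (⇑T) (fun ω => A (E, ω)) := by
  intro E
  rcases isEmpty_or_nonempty Ω with hΩ | hΩ
  · exact ⟨0, fun ε hε => ⟨0, fun n hn ω => (IsEmpty.false ω).elim⟩⟩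
  set B : Ω → SL2 := fun ω' => A (E, ω') with hBdef
  set f : ℕ → Ω → ℝ := fun n ω => cocNorm (⇑T) B n ω with hfdef
  obtain ⟨ω₁⟩ := hΩ
  -- a uniform bound on one-step norms
  have hcoe_cont : Continuous fun ω : Ω => ‖((B ω : SL2) : Matrix (Fin 2) (Fin 2) ℝ)‖ := by
    have h1 : Continuous B := by
      exact A.continuous.comp (Continuous.prodMk_right (E : I))
    have h2 : Continuous fun g : SL2 => (g : Matrix (Fin 2) (Fin 2) ℝ) := by
      have : Isometry (fun g : SL2 => (g : Matrix (Fin 2) (Fin 2) ℝ)) :=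
        fun x y => rfl
      exact this.continuous
    exact (h2.comp h1).norm
  obtain ⟨ω₀, -, hω₀⟩ := isCompact_univ.exists_isMaxOn ⟨ω₁, Set.mem_univ ω₁⟩
    hcoe_cont.continuousOn
  set C1 : ℝ := max (Real.log ‖((B ω₀ : SL2) : Matrix (Fin 2) (Fin 2) ℝ)‖) 0 with hC1def
  have hC1 : 0 ≤ C1 := le_max_right _ _
  have hf1 : ∀ ω, f 1 ω ≤ C1 := by
    intro ω
    have h1 : ‖((B ω : SL2) : Matrix (Fin 2) (Fin 2) ℝ)‖
        ≤ ‖((B ω₀ : SL2) : Matrix (Fin 2) (Fin 2) ℝ)‖ := hω₀ (Set.mem_univ ω)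
    have h2 : f 1 ω = Real.log ‖((B ω : SL2) : Matrix (Fin 2) (Fin 2) ℝ)‖ := by
      rw [hfdef]
      simp only [APCoc.cocNorm_eq]
      rw [APCoc.cm_one]
    rw [h2]
    calc Real.log ‖((B ω : SL2) : Matrix (Fin 2) (Fin 2) ℝ)‖
        ≤ Real.log ‖((B ω₀ : SL2) : Matrix (Fin 2) (Fin 2) ℝ)‖ := by
          apply Real.log_le_log _ h1
          exact APCoc.norm_coe_pos (B ω)
    _ ≤ C1 := le_max_left _ _
  have hf0 : ∀ n ω, 0 ≤ f n ω := fun n ω => APCoc.cocNorm_nonneg (⇑T) B n ω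
  have hfsub : ∀ m n ω, f (m + n) ω ≤ f m (T^[n] ω) + f n ω :=
    fun m n ω => APCoc.cocNorm_subadd (⇑T) B m n ω
  have hfC1 : ∀ n ω, f n ω ≤ n * C1 := by
    intro n
    induction n with
    | zero =>
      intro ω
      have : f 0 ω = 0 := by
        rw [hfdef]
        simp only [APCoc.cocNorm_eq]
        rw [APCoc.cm_zero, APGeom.norm_one_M2, Real.log_one]
      rw [this]; simp
    | succ n ih =>
      intro ω
      have h1 : f (1 + n) ω ≤ f 1 (T^[n] ω) + f n ω := hfsub 1 n ω
      have h2 : (1:ℕ) + n = n + 1 := by omega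
      rw [h2] at h1
      calc f (n+1) ω ≤ f 1 (T^[n] ω) + f n ω := h1
      _ ≤ C1 + n * C1 := add_le_add (hf1 _) (ih ω)
      _ = (n+1 : ℕ) * C1 := by push_cast; ring
  -- the sequence of suprema
  set a : ℕ → ℝ := fun n => sSup (Set.range (f n)) with hadef
  have hane : ∀ n, (Set.range (f n)).Nonempty := fun n => ⟨f n ω₁, ⟨ω₁, rfl⟩⟩
  have habdd : ∀ n, BddAbove (Set.range (f n)) := by
    intro n
    refine ⟨n * C1, ?_⟩
    rintro y ⟨ω, rfl⟩
    exact hfC1 n ω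
  have hfa : ∀ n ω, f n ω ≤ a n := fun n ω => le_csSup (habdd n) ⟨ω, rfl⟩
  have haC1 : ∀ n, a n ≤ n * C1 := by
    intro n
    exact csSup_le (hane n) (by rintro y ⟨ω, rfl⟩; exact hfC1 n ω)
  have ha0 : ∀ n, 0 ≤ a n := fun n => le_trans (hf0 n ω₁) (hfa n ω₁)
  have hasub : Subadditive a := by
    intro m n
    apply csSup_le (hane (m+n))
    rintro y ⟨ω, rfl⟩
    calc f (m+n) ω ≤ f m (T^[n] ω) + f n ω := hfsub m n ω
    _ ≤ a m + a n := add_le_add (hfa m _) (hfa n ω)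
  have habb : BddBelow (Set.range fun n : ℕ => a n / n) := by
    refine ⟨0, ?_⟩
    rintro y ⟨n, rfl⟩
    exact div_nonneg (ha0 n) (Nat.cast_nonneg n)
  set L : ℝ := hasub.lim with hLdef
  have hLtend : Filter.Tendsto (fun n : ℕ => a n / n) Filter.atTop (nhds L) :=
    hasub.tendsto_lim habb
  have hL0 : 0 ≤ L :=
    ge_of_tendsto hLtend (Filter.Eventually.of_forall fun n =>
      div_nonneg (ha0 n) (Nat.cast_nonneg n))
  have hnL : ∀ n : ℕ, n ≠ 0 → (n:ℝ) * L ≤ a n := by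
    intro n hn
    have h1 := hasub.lim_le_div habb hn
    have hn0 : (0:ℝ) < n := by positivity
    rw [le_div_iff₀ hn0] at h1
    linarith
  -- conclusion
  refine ⟨L, ?_⟩
  intro ε hε
  -- upper bound threshold
  obtain ⟨N1, hN1⟩ := (Metric.tendsto_atTop.mp hLtend) (ε/2) (by linarith)
  -- lower bound threshold
  have hlower : ∃ N2 : ℕ, ∀ n ≥ N2, ∀ ω, L - ε/2 < (1/(n:ℝ)) * f n ω := by
    rcases le_or_gt L 0 with hL | hLpos
    · refine ⟨1, fun n hn ω => ?_⟩
      have hn0 : (0:ℝ) < n := by exact_mod_cast Nat.lt_of_lt_of_le Nat.zero_lt_one hn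
      have := hf0 n ω
      have : 0 ≤ (1/(n:ℝ)) * f n ω := by positivity
      linarith
    · -- main case: L > 0, use the avalanche principle machinery
      set δ : ℝ := min (L/24) (ε/26) with hδdef
      have hδ0 : 0 < δ := lt_min (by linarith) (by linarith)
      have hδL : 24*δ ≤ L := by
        have := min_le_left (L/24) (ε/26); rw [← hδdef] at this; linarith
      have hδε : 26*δ ≤ ε := by
        have := min_le_right (L/24) (ε/26); rw [← hδdef] at this; linarith
      obtain ⟨K₁, hK₁⟩ := (Metric.tendsto_atTop.mp hLtend) δ hδ0
      set K : ℕ := max K₁ 1 with hKdef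
      have hK_a : ∀ k : ℕ, K ≤ k → a k ≤ (k:ℝ) * (L + δ) := by
        intro k hk
        have h1 := hK₁ k (le_trans (le_max_left _ _) hk)
        rw [Real.dist_eq] at h1
        have h2 := (abs_lt.mp h1).2
        have hk1 : (1:ℝ) ≤ (k:ℝ) := by
          exact_mod_cast le_trans (le_max_right K₁ 1) hk
        have hk0 : (0:ℝ) < k := by linarith
        have h3 : a k / k < L + δ := by linarith
        rw [div_lt_iff₀ hk0] at h3
        linarith
      set K2 : ℕ := Nat.ceil ((3*C1+3)/L) with hK2def
      set K3 : ℕ := Nat.ceil ((C1+2)/δ) with hK3def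
      obtain ⟨n₁, hn₁ge, hvar⟩ := hV δ hδ0 (2*(K + K2 + K3) + 2)
      set l : ℕ := n₁ / 2 with hldef
      have hK1' : 1 ≤ K := le_max_right _ _
      have hl1 : 1 ≤ l := by omega
      have h2l : 2*l ≤ n₁ := by omega
      have hn3l : n₁ ≤ 3*l := by omega
      have hlK : K ≤ l := by omega
      have hlK2 : K2 ≤ l := by omega
      have hlK3 : K3 ≤ l := by omega
      have hn₁0 : (0:ℝ) < n₁ := by
        have : (1:ℕ) ≤ n₁ := by omega
        exact_mod_cast this
      have hlR1 : (1:ℝ) ≤ (l:ℝ) := by exact_mod_cast hl1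
      -- small variation at scale n₁
      have hvar' : ∀ ω ρ : Ω, f n₁ ρ ≤ f n₁ ω + δ * n₁ := by
        intro ω ρ
        have h1 : (1/(n₁:ℝ)) * |f n₁ ρ - f n₁ ω| < δ := hvar E ρ ω
        have h2 : |f n₁ ρ - f n₁ ω| < (n₁:ℝ) * δ := by
          calc |f n₁ ρ - f n₁ ω| = (n₁:ℝ) * ((1/(n₁:ℝ)) * |f n₁ ρ - f n₁ ω|) := by
                field_simp
          _ < (n₁:ℝ) * δ := by exact mul_lt_mul_of_pos_left h1 hn₁0
        have h3 := (abs_lt.mp h2).2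
        linarith
      have hflow : ∀ ω, (n₁:ℝ)*L - δ*n₁ ≤ f n₁ ω := by
        intro ω
        have h1 : a n₁ ≤ f n₁ ω + δ*n₁ :=
          csSup_le (hane n₁) (by rintro y ⟨ρ, rfl⟩; exact hvar' ω ρ)
        have h2 := hnL n₁ (by omega)
        linarith
      -- block lower bound at scale l
      have hblockf : ∀ ω, (l:ℝ)*(L - 6*δ) ≤ f l ω := by
        intro ω
        have e : (n₁ - l) + l = n₁ := by omega
        have h1 : f n₁ ω ≤ f (n₁ - l) (T^[l] ω) + f l ω := by
          have := hfsub (n₁ - l) l ω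
          rwa [e] at this
        have h2 : f (n₁ - l) (T^[l] ω) ≤ a (n₁ - l) := hfa _ _
        have h3 : a (n₁ - l) ≤ ((n₁ - l : ℕ):ℝ) * (L + δ) := hK_a _ (by omega)
        have hcast : ((n₁ - l : ℕ) : ℝ) = (n₁:ℝ) - (l:ℝ) := by
          have : l ≤ n₁ := by omega
          push_cast [this]; ring
        rw [hcast] at h3
        have h4 := hflow ω
        have hl3 : (n₁:ℝ) ≤ 3*(l:ℝ) := by exact_mod_cast hn3l
        have h5 : (n₁:ℝ)*δ ≤ 3*(l:ℝ)*δ := by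
          have := mul_le_mul_of_nonneg_right hl3 hδ0.le
          linarith
        have h6 : 0 ≤ (l:ℝ)*δ := mul_nonneg (Nat.cast_nonneg l) hδ0.le
        linarith
      -- junction lower bound at scale 2l
      have hjuncf : ∀ ρ, (n₁:ℝ)*L - δ*n₁ - C1 ≤ f (2*l) ρ := by
        intro ρ
        have e : (n₁ - 2*l) + 2*l = n₁ := by omega
        have h1 : f n₁ ρ ≤ f (n₁ - 2*l) (T^[2*l] ρ) + f (2*l) ρ := by
          have := hfsub (n₁ - 2*l) (2*l) ρ
          rwa [e] at this
        have h2 : f (n₁ - 2*l) (T^[2*l] ρ) ≤ ((n₁ - 2*l : ℕ):ℝ) * C1 := hfC1 _ _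
        have h3 : ((n₁ - 2*l : ℕ):ℝ) ≤ 1 := by
          exact_mod_cast (by omega : n₁ - 2*l ≤ 1)
        have h5 : ((n₁ - 2*l:ℕ):ℝ) * C1 ≤ C1 := by
          have := mul_le_mul_of_nonneg_right h3 hC1
          linarith
        have h4 := hflow ρ
        linarith
      -- upper bound at scale l
      have hupl : ∀ ω, f l ω ≤ (l:ℝ)*(L + δ) := fun ω =>
        le_trans (hfa l ω) (hK_a l hlK)
      -- numeric facts about l
      have hlL : 3*C1 + 3 ≤ (l:ℝ)*L := by
        have h1 : (3*C1+3)/L ≤ (K2:ℝ) := Nat.le_ceil _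
        have h2 : ((K2:ℕ):ℝ) ≤ (l:ℝ) := by exact_mod_cast hlK2
        rw [div_le_iff₀ hLpos] at h1
        have h3 := mul_le_mul_of_nonneg_right h2 hLpos.le
        linarith
      have hlδ : C1 + 2 ≤ (l:ℝ)*δ := by
        have h1 : (C1+2)/δ ≤ (K3:ℝ) := Nat.le_ceil _
        have h2 : ((K3:ℕ):ℝ) ≤ (l:ℝ) := by exact_mod_cast hlK3
        rw [div_le_iff₀ hδ0] at h1
        have h3 := mul_le_mul_of_nonneg_right h2 hδ0.le
        linarith
      -- the constants for the avalanche principle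
      set Mc : ℝ := Real.exp ((l:ℝ)*(L - 6*δ)) with hMcdef
      set cc : ℝ := Real.exp (-(4*(l:ℝ)*δ + C1)) with hccdef
      have hcc0 : 0 < cc := Real.exp_pos _
      have hMc0 : 0 < Mc := Real.exp_pos _
      have hcc1 : cc ≤ 1 := by
        rw [hccdef]
        calc Real.exp (-(4*(l:ℝ)*δ + C1)) ≤ Real.exp 0 := by
              apply Real.exp_le_exp.mpr
              have t0 : (0:ℝ) ≤ 4*(l:ℝ)*δ :=
                mul_nonneg (mul_nonneg (by norm_num) (Nat.cast_nonneg l)) hδ0.le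
              linarith
        _ = 1 := Real.exp_zero
      have hexp1 := Real.exp_one_gt_d9
      have h12 : 12 ≤ cc^3 * Mc^2 := by
        have e1 : cc^3 * Mc^2
            = Real.exp ((3:ℕ)*(-(4*(l:ℝ)*δ + C1)) + (2:ℕ)*((l:ℝ)*(L-6*δ))) := by
          rw [Real.exp_add, Real.exp_nat_mul, Real.exp_nat_mul, hccdef, hMcdef]
        have e2 : (3:ℝ) ≤ (3:ℕ)*(-(4*(l:ℝ)*δ + C1)) + (2:ℕ)*((l:ℝ)*(L-6*δ)) := by
          push_cast
          have t1 : (l:ℝ)*(24*δ) ≤ (l:ℝ)*L :=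
            mul_le_mul_of_nonneg_left hδL (Nat.cast_nonneg l)
          linarith
        have e3 : Real.exp 3 ≤ cc^3 * Mc^2 := by
          rw [e1]; exact Real.exp_le_exp.mpr e2
        have e4 : (12:ℝ) < Real.exp 3 := by
          have t1 : Real.exp 3 = Real.exp 1 ^ (3:ℕ) := by
            rw [← Real.exp_nat_mul]; norm_num
          have t2 : (2.7182818283:ℝ)^(3:ℕ) ≤ Real.exp 1 ^ (3:ℕ) :=
            pow_le_pow_left₀ (by norm_num) hexp1.le 3
          have t3 : (12:ℝ) < (2.7182818283:ℝ)^(3:ℕ) := by norm_num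
          rw [t1]; linarith
        linarith
      -- block and junction hypotheses for the chain lemma
      have hblockM : ∀ ρ, Mc ≤ ‖APCoc.cm (⇑T) B l ρ‖ := by
        intro ρ
        have h1 : (l:ℝ)*(L-6*δ) ≤ f l ρ := hblockf ρ
        have h2 : Real.exp (f l ρ) = ‖APCoc.cm (⇑T) B l ρ‖ :=
          Real.exp_log (APCoc.norm_cm_pos (⇑T) B l ρ)
        rw [hMcdef, ← h2]
        exact Real.exp_le_exp.mpr h1
      have hjuncM : ∀ ρ, cc * (‖APCoc.cm (⇑T) B l (T^[l] ρ)‖ * ‖APCoc.cm (⇑T) B l ρ‖)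
          ≤ ‖APCoc.cm (⇑T) B (2*l) ρ‖ := by
        intro ρ
        have h2 : Real.exp (f l (T^[l] ρ)) = ‖APCoc.cm (⇑T) B l (T^[l] ρ)‖ :=
          Real.exp_log (APCoc.norm_cm_pos (⇑T) B l _)
        have h3 : Real.exp (f l ρ) = ‖APCoc.cm (⇑T) B l ρ‖ :=
          Real.exp_log (APCoc.norm_cm_pos (⇑T) B l ρ)
        have h4 : Real.exp (f (2*l) ρ) = ‖APCoc.cm (⇑T) B (2*l) ρ‖ :=
          Real.exp_log (APCoc.norm_cm_pos (⇑T) B (2*l) ρ)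
        rw [hccdef, ← h2, ← h3, ← h4, ← Real.exp_add, ← Real.exp_add]
        apply Real.exp_le_exp.mpr
        have h5 := hupl (T^[l] ρ)
        have h6 := hupl ρ
        have h7 := hjuncf ρ
        have h8 : ((2*l:ℕ):ℝ) = 2*(l:ℝ) := by push_cast; ring
        have h9 : 2*(l:ℝ) ≤ (n₁:ℝ) := by exact_mod_cast h2l
        have h10 : 0 ≤ ((n₁:ℝ) - 2*(l:ℝ)) * (L - δ) := by
          apply mul_nonneg (by linarith) (by linarith)
        linarith [h5, h6, h7, h10]
      have hchain := APCoc.ap_chain (⇑T) B l cc Mc hcc0 hcc1 h12 hMc0 hblockM hjuncM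
      -- choose the final threshold
      refine ⟨l * K3 + l + 1, fun N hN ω => ?_⟩
      set q : ℕ := N / l + 1 with hqdef
      have hq1 : 1 ≤ q := Nat.le_add_left 1 (N / l)
      set r : ℕ := N % l with hrdef
      set p : ℕ := l * (N / l) with hpdef
      have hdm : p + r = N := Nat.div_add_mod N l
      have hmod : r < l := Nat.mod_lt _ (by omega)
      have hql : q * l = p + l := by
        rw [hqdef, Nat.add_mul, one_mul, Nat.mul_comm]
      have h1 : N < q * l := by rw [hql]; omega
      have h2 : q * l ≤ N + l := by rw [hql]; omega
      -- lower bound on f (q*l) ω from the chain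
      have hcb := hchain q hq1 ω
      have hpos1 : (0:ℝ) < (cc/4)^(q-1) := pow_pos (by linarith) _
      have hpos2 : (0:ℝ) < Mc^q := pow_pos hMc0 _
      have hlog1 : Real.log ((cc/4)^(q-1) * Mc^q) ≤ f (q*l) ω := by
        have := Real.log_le_log (mul_pos hpos1 hpos2) hcb
        exact this
      have hlog2 : Real.log ((cc/4)^(q-1) * Mc^q)
          = ((q-1:ℕ):ℝ) * Real.log (cc/4) + (q:ℝ) * Real.log Mc := by
        rw [Real.log_mul hpos1.ne' hpos2.ne', Real.log_pow, Real.log_pow]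
      have hqm1 : ((q-1:ℕ):ℝ) = (q:ℝ) - 1 := by
        have : 1 ≤ q := hq1
        push_cast [this]; ring
      have hlogMc : Real.log Mc = (l:ℝ)*(L-6*δ) := by
        rw [hMcdef, Real.log_exp]
      have hlogc4 : -(4*(l:ℝ)*δ + C1 + 2) ≤ Real.log (cc/4) := by
        rw [Real.log_div hcc0.ne' (by norm_num), hccdef, Real.log_exp]
        have h4lt : Real.log 4 < 2 := by
          rw [Real.log_lt_iff_lt_exp (by norm_num)]
          have t1 : Real.exp 2 = Real.exp 1 ^ (2:ℕ) := by
            rw [← Real.exp_nat_mul]; norm_num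
          nlinarith
        linarith
      -- cut down from q*l to N
      have e : (q*l - N) + N = q*l := Nat.sub_add_cancel h1.le
      have hcut1 : f (q*l) ω ≤ f (q*l - N) (T^[N] ω) + f N ω := by
        have := hfsub (q*l - N) N ω
        rwa [e] at this
      have hcutC : f (q*l - N) (T^[N] ω) ≤ ((q*l - N :ℕ):ℝ) * C1 := hfC1 _ _
      have hsmall : ((q*l - N:ℕ):ℝ) ≤ (l:ℝ) := by
        exact_mod_cast (by rw [hql]; omega : q*l - N ≤ l)
      have hsmallC : ((q*l - N:ℕ):ℝ) * C1 ≤ (l:ℝ) * C1 :=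
        mul_le_mul_of_nonneg_right hsmall hC1
      -- cast facts
      have hNR1 : (1:ℝ) ≤ (N:ℝ) := by exact_mod_cast (by omega : 1 ≤ N)
      have hNR0 : (0:ℝ) < (N:ℝ) := by linarith
      have hNq : (N:ℝ) < (q:ℝ)*(l:ℝ) := by exact_mod_cast h1
      have hqR1 : (1:ℝ) ≤ (q:ℝ) := by exact_mod_cast hq1
      have hNK : (l:ℝ)*(C1+2) ≤ δ*(N:ℝ) := by
        have t1 : l * K3 ≤ N :=
          le_trans (Nat.le_add_right (l*K3) (l+1)) (by rw [← Nat.add_assoc]; exact hN)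
        have t2 : ((l*K3:ℕ):ℝ) ≤ (N:ℝ) := by exact_mod_cast t1
        have t3 : ((l*K3:ℕ):ℝ) = (l:ℝ)*(K3:ℝ) := by push_cast; ring
        have t4 : (C1+2)/δ ≤ (K3:ℝ) := Nat.le_ceil _
        rw [div_le_iff₀ hδ0] at t4
        have t5 : (l:ℝ)*(C1+2) ≤ (l:ℝ)*((K3:ℝ)*δ) := by
          apply mul_le_mul_of_nonneg_left t4 (by linarith)
        have t6 : (l:ℝ)*((K3:ℝ)*δ) = ((l:ℝ)*(K3:ℝ))*δ := by ring
        rw [t6] at t5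
        rw [t3] at t2
        have t7 := mul_le_mul_of_nonneg_right t2 hδ0.le
        linarith
      -- assemble the lower bound
      have hFq : ((q:ℝ) - 1) * Real.log (cc/4) + (q:ℝ) * ((l:ℝ)*(L-6*δ)) ≤ f (q*l) ω := by
        calc ((q:ℝ) - 1) * Real.log (cc/4) + (q:ℝ) * ((l:ℝ)*(L-6*δ))
            = ((q-1:ℕ):ℝ) * Real.log (cc/4) + (q:ℝ) * Real.log Mc := by
              rw [hqm1, hlogMc]
        _ = Real.log ((cc/4)^(q-1) * Mc^q) := hlog2.symm
        _ ≤ f (q*l) ω := hlog1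
      have hFN : (L - 12*δ) * (N:ℝ) ≤ f N ω := by
        have s1 : 0 ≤ (q:ℝ) - 1 := by linarith
        have s2 : ((q:ℝ)-1) * (-(4*(l:ℝ)*δ + C1 + 2)) ≤ ((q:ℝ)-1) * Real.log (cc/4) :=
          mul_le_mul_of_nonneg_left hlogc4 s1
        have s3 : ((q:ℝ)-1)*(C1+2) ≤ ((q:ℝ)-1)*((l:ℝ)*δ) :=
          mul_le_mul_of_nonneg_left hlδ s1
        have s4 : 0 ≤ (l:ℝ)*δ := by positivity
        have s5 : ((q:ℝ)-1)*((l:ℝ)*δ) ≤ (q:ℝ)*((l:ℝ)*δ) := by linarith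
        have s6 : (N:ℝ)*(L - 11*δ) ≤ ((q:ℝ)*(l:ℝ))*(L-11*δ) := by
          apply mul_le_mul_of_nonneg_right hNq.le (by linarith)
        have s7 : (l:ℝ)*C1 ≤ δ*(N:ℝ) := by linarith
        linarith [hFq, hcut1, hcutC, hsmallC, s2, s3, s5, s6, s7]
      -- divide by N
      have hfin : L - ε/2 < f N ω / N := by
        have t1 : (L - 12*δ) ≤ f N ω / N := by
          rw [le_div_iff₀ hNR0]
          linarith
        have t2 : L - ε/2 < L - 12*δ := by linarith
        linarith
      have t3 : (1/(N:ℝ)) * f N ω = f N ω / N := by ring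
      rw [t3]
      exact hfin
  obtain ⟨N2, hN2⟩ := hlower
  refine ⟨max (max N1 N2) 1, fun n hn ω => ?_⟩
  have hn1 : N1 ≤ n := le_trans (le_trans (le_max_left _ _) (le_max_left _ _)) hn
  have hn2 : N2 ≤ n := le_trans (le_trans (le_max_right _ _) (le_max_left _ _)) hn
  have hn3 : 1 ≤ n := le_trans (le_max_right _ _) hn
  have hn0 : (0:ℝ) < n := by exact_mod_cast hn3
  have hup : (1/(n:ℝ)) * f n ω < L + ε := by
    have h1 := hN1 n hn1
    rw [Real.dist_eq] at h1
    have h2 : a n / n < L + ε/2 := by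
      have := abs_lt.mp h1
      linarith [this.1, this.2]
    have h3 : f n ω / n ≤ a n / n := by
      gcongr
      exact hfa n ω
    have h4 : (1/(n:ℝ)) * f n ω = f n ω / n := by ring
    linarith
  have hlo := hN2 n hn2 ω
  rw [abs_lt]
  constructor <;> [linarith; linarith]
end

section
/- Let (Ω,T) be a dynamical system with ergodic measure μ, and for f ∈ C(Ω,ℝ) let Σ_f denote the almost sure spectrum of the Schrödinger operators H_ω with potential V_ω(n) = f(T^n ω). Then the map f ↦ Leb(Σ_f) is upper semi-continuous on C(Ω,ℝ): for every δ > 0, the set {f ∈ C(Ω,ℝ) : Leb(Σ_f) < δ} is open. -/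
open scoped Matrix.Norms.L2Operator
open Filter Topology MeasureTheory

open scoped InnerProductSpace ENNReal RealInnerProductSpace
set_option maxHeartbeats 1000000

noncomputable abbrev E2 := lp (fun _ : ℤ => ℝ) 2


-- pointwise domination
lemma e2_dom (x y : E2) (c : ℝ) (hc : 0 ≤ c) (h : ∀ n, ‖x n‖ ≤ c * ‖y n‖) :
    ‖x‖ ≤ c * ‖y‖ := by
  have h2 : (0:ℝ) < (2:ℝ≥0∞).toReal := by norm_num
  rw [lp.norm_eq_tsum_rpow h2 x, lp.norm_eq_tsum_rpow h2 y]
  have hsum : ∀ z : E2, Summable fun n => ‖z n‖ ^ (2:ℝ≥0∞).toReal := by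
    intro z
    have := lp.memℓp z
    rwa [memℓp_gen_iff h2] at this
  have hle : ∑' n, ‖x n‖ ^ (2:ℝ≥0∞).toReal ≤ ∑' n, (c ^ (2:ℝ≥0∞).toReal) * ‖y n‖ ^ (2:ℝ≥0∞).toReal := by
    refine (hsum x).tsum_le_tsum (fun n => ?_) ((hsum y).mul_left _)
    rw [← Real.mul_rpow hc (norm_nonneg _)]
    exact Real.rpow_le_rpow (norm_nonneg _) (h n) (by positivity)
  calc (∑' n, ‖x n‖ ^ (2:ℝ≥0∞).toReal) ^ (1/(2:ℝ≥0∞).toReal)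
      ≤ ((c ^ (2:ℝ≥0∞).toReal) * ∑' n, ‖y n‖ ^ (2:ℝ≥0∞).toReal) ^ (1/(2:ℝ≥0∞).toReal) := by
        rw [← tsum_mul_left]
        exact Real.rpow_le_rpow (tsum_nonneg (fun n => by positivity)) hle (by positivity)
    _ = c * (∑' n, ‖y n‖ ^ (2:ℝ≥0∞).toReal) ^ (1/(2:ℝ≥0∞).toReal) := by
        rw [Real.mul_rpow (by positivity) (tsum_nonneg (fun n => by positivity)),
          ← Real.rpow_mul hc]
        norm_num

lemma summable_sq (ψ : E2) : Summable fun n => ‖ψ n‖ ^ (2:ℝ≥0∞).toReal := by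
  have h2 : (0:ℝ) < (2:ℝ≥0∞).toReal := by norm_num
  have := lp.memℓp ψ
  rwa [memℓp_gen_iff h2] at this

lemma summable_sq_shift (ψ : E2) (k : ℤ) :
    Summable fun n : ℤ => ‖ψ (n + k)‖ ^ (2:ℝ≥0∞).toReal := by
  have h := ((Equiv.addRight k).summable_iff
    (f := fun n : ℤ => ‖ψ n‖ ^ (2:ℝ≥0∞).toReal)).2 (summable_sq ψ)
  simpa [Function.comp_def] using h

noncomputable def e2shift (ψ : E2) (k : ℤ) : E2 :=
  ⟨fun n => ψ (n + k), memℓp_gen (summable_sq_shift ψ k)⟩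

@[simp] lemma e2shift_apply (ψ : E2) (k n : ℤ) : (e2shift ψ k : ∀ _ : ℤ, ℝ) n = ψ (n + k) := rfl

lemma norm_e2shift (ψ : E2) (k : ℤ) : ‖e2shift ψ k‖ = ‖ψ‖ := by
  have h2 : (0:ℝ) < (2:ℝ≥0∞).toReal := by norm_num
  rw [lp.norm_eq_tsum_rpow h2, lp.norm_eq_tsum_rpow h2]
  congr 1
  exact Equiv.tsum_eq (Equiv.addRight k) (fun n => ‖ψ n‖ ^ (2:ℝ≥0∞).toReal)

lemma cs_pos (P : E2 →L[ℝ] E2) (hsym : ∀ ψ φ : E2, ⟪P ψ, φ⟫_ℝ = ⟪ψ, P φ⟫_ℝ)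
    (hpos : ∀ ψ : E2, 0 ≤ ⟪P ψ, ψ⟫_ℝ) (ψ : E2) : ‖P ψ‖ ^ 2 ≤ ‖P‖ * ⟪P ψ, ψ⟫_ℝ := by
  set φ := P ψ with hφ
  have key : ∀ t : ℝ, 0 ≤ ⟪P φ, φ⟫_ℝ * (t * t) + (2 * ⟪P ψ, φ⟫_ℝ) * t + ⟪P ψ, ψ⟫_ℝ := by
    intro t
    have h0 := hpos (ψ + t • φ)
    have hexp : ⟪P (ψ + t • φ), ψ + t • φ⟫_ℝ
        = ⟪P φ, φ⟫_ℝ * (t * t) + (2 * ⟪P ψ, φ⟫_ℝ) * t + ⟪P ψ, ψ⟫_ℝ := by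
      rw [map_add, _root_.map_smul]
      rw [inner_add_left, inner_add_right, inner_add_right]
      rw [real_inner_smul_left, real_inner_smul_left, real_inner_smul_right,
        real_inner_smul_right]
      have h1 : ⟪P φ, ψ⟫_ℝ = ⟪P ψ, φ⟫_ℝ := by
        rw [hsym φ ψ, real_inner_comm]
      rw [h1]; ring
    rwa [hexp] at h0
  have hd := discrim_le_zero key
  rw [discrim] at hd
  -- hd : (2 * ⟪P ψ, φ⟫_ℝ)^2 - 4 * ⟪P φ, φ⟫_ℝ * ⟪P ψ, ψ⟫_ℝ ≤ 0
  have h2 : ⟪P ψ, φ⟫_ℝ ^ 2 ≤ ⟪P φ, φ⟫_ℝ * ⟪P ψ, ψ⟫_ℝ := by nlinarith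
  have h3 : ⟪P ψ, φ⟫_ℝ = ‖P ψ‖ ^ 2 := by
    rw [hφ, real_inner_self_eq_norm_sq]
  have h4 : ⟪P φ, φ⟫_ℝ ≤ ‖P‖ * ‖P ψ‖ ^ 2 := by
    calc ⟪P φ, φ⟫_ℝ ≤ ‖P φ‖ * ‖φ‖ := real_inner_le_norm _ _
      _ ≤ (‖P‖ * ‖φ‖) * ‖φ‖ := by
          have := P.le_opNorm φ
          nlinarith [norm_nonneg φ]
      _ = ‖P‖ * ‖P ψ‖ ^ 2 := by rw [hφ]; ring
  rcases eq_or_lt_of_le (norm_nonneg (P ψ)) with h5 | h5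
  · nlinarith [P.opNorm_nonneg, hpos ψ]
  · have h6 : (‖P ψ‖ ^ 2) ^ 2 ≤ (‖P‖ * ‖P ψ‖ ^ 2) * ⟪P ψ, ψ⟫_ℝ := by
      calc (‖P ψ‖ ^ 2) ^ 2 = ⟪P ψ, φ⟫_ℝ ^ 2 := by rw [h3]
        _ ≤ ⟪P φ, φ⟫_ℝ * ⟪P ψ, ψ⟫_ℝ := h2
        _ ≤ (‖P‖ * ‖P ψ‖ ^ 2) * ⟪P ψ, ψ⟫_ℝ := by
            have := hpos ψ; nlinarith
    have h7 : 0 < ‖P ψ‖ ^ 2 := by positivity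
    nlinarith

lemma isUnit_of_symm_bddBelow (B : E2 →L[ℝ] E2)
    (hsym : ∀ ψ φ : E2, ⟪B ψ, φ⟫_ℝ = ⟪ψ, B φ⟫_ℝ)
    (c : ℝ) (hc : 0 < c) (hlb : ∀ ψ : E2, c * ‖ψ‖ ≤ ‖B ψ‖) : IsUnit B := by
  have hker : ∀ ψ : E2, B ψ = 0 → ψ = 0 := by
    intro ψ hψ
    have h1 := hlb ψ
    rw [hψ, norm_zero] at h1
    have h2 : ‖ψ‖ = 0 := le_antisymm (by nlinarith [norm_nonneg ψ]) (norm_nonneg ψ)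
    exact norm_eq_zero.1 h2
  have hinj : LinearMap.ker (B : E2 →ₗ[ℝ] E2) = ⊥ := LinearMap.ker_eq_bot'.2 hker
  -- closed range
  have hanti : AntilipschitzWith (⟨c⁻¹, by positivity⟩ : NNReal) B := by
    apply ContinuousLinearMap.antilipschitz_of_bound
    intro x
    have h1 := hlb x
    change ‖x‖ ≤ c⁻¹ * ‖B x‖
    rw [← div_eq_inv_mul, le_div_iff₀ hc]
    linarith
  have hclosed : IsClosed (LinearMap.range (B : E2 →ₗ[ℝ] E2) : Set E2) := by
    exact hanti.isClosed_range B.uniformContinuous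
  -- dense range via orthogonality
  let R : Submodule ℝ E2 := LinearMap.range (B : E2 →ₗ[ℝ] E2)
  have hRclosed : IsClosed (R : Set E2) := hclosed
  haveI : CompleteSpace R := hRclosed.completeSpace_coe
  have horth : Rᗮ = ⊥ := by
    rw [Submodule.eq_bot_iff]
    intro v hv
    have hv' : ∀ ψ : E2, ⟪B ψ, v⟫_ℝ = 0 := fun ψ =>
      (Submodule.mem_orthogonal R v).1 hv _ (LinearMap.mem_range_self _ ψ)
    have hBv : B v = 0 := by
      have := hv' (B v)
      rw [hsym] at this
      exact inner_self_eq_zero.1 this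
    exact hker v hBv
  have hsurj : LinearMap.range (B : E2 →ₗ[ℝ] E2) = ⊤ := Submodule.orthogonal_eq_bot_iff.1 horth
  let e := ContinuousLinearEquiv.ofBijective B hinj hsurj
  refine ⟨⟨B, (e.symm : E2 →L[ℝ] E2), ?_, ?_⟩, rfl⟩
  · refine ContinuousLinearMap.ext fun x => ?_
    rw [ContinuousLinearMap.mul_apply, ContinuousLinearMap.one_apply]
    exact ContinuousLinearEquiv.ofBijective_apply_symm_apply B hinj hsurj x
  · refine ContinuousLinearMap.ext fun x => ?_
    rw [ContinuousLinearMap.mul_apply, ContinuousLinearMap.one_apply]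
    exact ContinuousLinearEquiv.ofBijective_symm_apply_apply B hinj hsurj x

lemma bddBelow_of_gap (B : E2 →L[ℝ] E2)
    (hsym : ∀ ψ φ : E2, ⟪B ψ, φ⟫_ℝ = ⟪ψ, B φ⟫_ℝ) (d : ℝ)
    (hgap : ∀ t : ℝ, t ∈ spectrum ℝ B → d ≤ |t|) :
    ∀ ψ : E2, d * ‖ψ‖ ≤ ‖B ψ‖ := by
  by_contra hcon
  push_neg at hcon
  obtain ⟨ψ₀, hψ₀⟩ := hcon
  have hψ₀norm : 0 < ‖ψ₀‖ := by
    rcases (norm_nonneg ψ₀).lt_or_eq with h | h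
    · exact h
    · exfalso; rw [← h] at hψ₀
      have : ψ₀ = 0 := norm_eq_zero.1 h.symm
      rw [this] at hψ₀; simp at hψ₀
  set u₀ : E2 := ‖ψ₀‖⁻¹ • ψ₀ with hu₀def
  have hu₀ : ‖u₀‖ = 1 := by
    rw [hu₀def, norm_smul, norm_inv, norm_norm, inv_mul_cancel₀ (ne_of_gt hψ₀norm)]
  set S : Set ℝ := (fun ψ : E2 => ‖B ψ‖) '' {ψ : E2 | ‖ψ‖ = 1} with hSdef
  have hSne : S.Nonempty := ⟨‖B u₀‖, ⟨u₀, hu₀, rfl⟩⟩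
  have hSbdd : BddBelow S := ⟨0, fun x ⟨ψ, _, hx⟩ => hx ▸ norm_nonneg _⟩
  set m : ℝ := sInf S with hmdef
  have hm0 : 0 ≤ m := le_csInf hSne (fun x ⟨ψ, _, hx⟩ => hx ▸ norm_nonneg _)
  have hmlb : ∀ ψ : E2, m * ‖ψ‖ ≤ ‖B ψ‖ := by
    intro ψ
    rcases eq_or_ne ψ 0 with rfl | hne
    · simp
    · have hn : 0 < ‖ψ‖ := norm_pos_iff.2 hne
      have hmem : ‖B (‖ψ‖⁻¹ • ψ)‖ ∈ S :=
        ⟨_, by rw [Set.mem_setOf_eq, norm_smul, norm_inv, norm_norm,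
          inv_mul_cancel₀ (ne_of_gt hn)], rfl⟩
      have := csInf_le hSbdd hmem
      rw [_root_.map_smul, norm_smul, norm_inv, norm_norm] at this
      calc m * ‖ψ‖ ≤ (‖ψ‖⁻¹ * ‖B ψ‖) * ‖ψ‖ := by nlinarith
        _ = ‖B ψ‖ := by field_simp
  have hmd : m < d := by
    have hmem : ‖B u₀‖ ∈ S := ⟨u₀, hu₀, rfl⟩
    have h1 := csInf_le hSbdd hmem
    have h2 : ‖B u₀‖ < d := by
      rw [hu₀def, _root_.map_smul, norm_smul, norm_inv, norm_norm]
      rw [inv_mul_lt_iff₀ hψ₀norm]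
      calc ‖B ψ₀‖ < d * ‖ψ₀‖ := hψ₀
        _ = ‖ψ₀‖ * d := mul_comm _ _
    exact lt_of_le_of_lt h1 h2
  -- m and -m are not in the spectrum
  have hmd' : ¬ (d ≤ |m|) := by rw [abs_of_nonneg hm0]; linarith
  have hm_not : (m : ℝ) ∉ spectrum ℝ B := fun h => hmd' (hgap m h)
  have hm_not' : (-m : ℝ) ∉ spectrum ℝ B := fun h => by
    have h2 := hgap (-m) h
    rw [abs_neg, abs_of_nonneg hm0] at h2
    linarith
  set aM : E2 →L[ℝ] E2 := algebraMap ℝ (E2 →L[ℝ] E2) m with haM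
  have hu1 : IsUnit (B - aM) := by
    have := spectrum.notMem_iff.1 hm_not
    simpa using this.neg
  have hu2 : IsUnit (B + aM) := by
    have := spectrum.notMem_iff.1 hm_not'
    have h2 : algebraMap ℝ (E2 →L[ℝ] E2) (-m) - B = -(B + aM) := by
      rw [map_neg, haM]; abel
    rw [h2] at this
    simpa using this.neg
  set P : E2 →L[ℝ] E2 := (B - aM) * (B + aM) with hPdef
  have hPunit : IsUnit P := hu1.mul hu2
  have hPeq : P = B * B - aM * aM := by
    rw [hPdef, sub_mul, mul_add, mul_add, Algebra.commutes m B]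
    abel
  have hPapply : ∀ ψ : E2, P ψ = B (B ψ) - (m * m) • ψ := by
    intro ψ
    rw [hPeq]
    have haMapp : ∀ φ : E2, aM φ = m • φ := by
      intro φ
      rw [haM, Algebra.algebraMap_eq_smul_one, ContinuousLinearMap.smul_apply,
        ContinuousLinearMap.one_apply]
    simp only [ContinuousLinearMap.sub_apply, ContinuousLinearMap.mul_apply]
    rw [haMapp, haMapp, smul_smul]
  have hPinner : ∀ ψ : E2, ⟪P ψ, ψ⟫_ℝ = ‖B ψ‖ ^ 2 - m ^ 2 * ‖ψ‖ ^ 2 := by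
    intro ψ
    rw [hPapply, inner_sub_left, real_inner_smul_left, hsym (B ψ) ψ,
      real_inner_self_eq_norm_sq, real_inner_self_eq_norm_sq]
    ring
  have hPpos : ∀ ψ : E2, 0 ≤ ⟪P ψ, ψ⟫_ℝ := by
    intro ψ
    rw [hPinner]
    have h := hmlb ψ
    nlinarith [mul_le_mul h h (by positivity) (norm_nonneg (B ψ)), hm0,
      norm_nonneg ψ]
  have hPsym : ∀ ψ φ : E2, ⟪P ψ, φ⟫_ℝ = ⟪ψ, P φ⟫_ℝ := by
    intro ψ φ
    rw [hPapply, hPapply, inner_sub_left, inner_sub_right,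
      real_inner_smul_left, real_inner_smul_right, hsym, hsym]
  obtain ⟨u, hu⟩ := hPunit
  set K : ℝ := ‖((u⁻¹ : (E2 →L[ℝ] E2)ˣ) : E2 →L[ℝ] E2)‖ with hKdef
  have hK0 : 0 ≤ K := norm_nonneg _
  have hKlb : ∀ ψ : E2, ‖ψ‖ ≤ K * ‖P ψ‖ := by
    intro ψ
    have h1 : ((u⁻¹ : (E2 →L[ℝ] E2)ˣ) : E2 →L[ℝ] E2) (P ψ) = ψ := by
      rw [← hu]
      have : ((u⁻¹ : (E2 →L[ℝ] E2)ˣ) : E2 →L[ℝ] E2) * (u : E2 →L[ℝ] E2) = 1 := u.inv_mul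
      calc ((u⁻¹ : (E2 →L[ℝ] E2)ˣ) : E2 →L[ℝ] E2) ((u : E2 →L[ℝ] E2) ψ)
          = (((u⁻¹ : (E2 →L[ℝ] E2)ˣ) : E2 →L[ℝ] E2) * (u : E2 →L[ℝ] E2)) ψ := rfl
        _ = ψ := by rw [this, ContinuousLinearMap.one_apply]
    calc ‖ψ‖ = ‖((u⁻¹ : (E2 →L[ℝ] E2)ˣ) : E2 →L[ℝ] E2) (P ψ)‖ := by rw [h1]
      _ ≤ K * ‖P ψ‖ := ContinuousLinearMap.le_opNorm _ _
  -- choose a near-minimizing unit vector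
  set ε : ℝ := min 1 (1 / ((K ^ 2 * ‖P‖ + 1) * (2 * m + 1))) with hεdef
  have hεpos : 0 < ε := by
    apply lt_min one_pos
    positivity
  obtain ⟨x, ⟨ψε, hψεs, rfl⟩, hxlt⟩ :=
    exists_lt_of_csInf_lt hSne (show m < m + ε by linarith)
  have hψεnorm : ‖ψε‖ = 1 := hψεs
  have h1 : 1 ≤ K * ‖P ψε‖ := by
    have := hKlb ψε
    rwa [hψεnorm] at this
  have h2 : ‖P ψε‖ ^ 2 ≤ ‖P‖ * (ε * (2 * m + ε)) := by
    have hcs := cs_pos P hPsym hPpos ψε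
    have h3 : ⟪P ψε, ψε⟫_ℝ ≤ ε * (2 * m + ε) := by
      rw [hPinner, hψεnorm]
      have h4 : ‖B ψε‖ ^ 2 < (m + ε) ^ 2 := by
        have h5 : ‖B ψε‖ < m + ε := hxlt
        nlinarith [norm_nonneg (B ψε)]
      nlinarith
    nlinarith [ContinuousLinearMap.opNorm_nonneg P, hPpos ψε]
  have hε1 : ε ≤ 1 := min_le_left _ _
  have hε2 : ε ≤ 1 / ((K ^ 2 * ‖P‖ + 1) * (2 * m + 1)) := min_le_right _ _
  have hPn : 0 ≤ ‖P‖ := norm_nonneg _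
  have hfin : (1:ℝ) ≤ K ^ 2 * (‖P‖ * (ε * (2 * m + ε))) := by
    nlinarith [norm_nonneg (P ψε)]
  have hεbound : ε * ((K ^ 2 * ‖P‖ + 1) * (2 * m + 1)) ≤ 1 := by
    rw [← le_div_iff₀ (by positivity)]
    exact hε2
  have hstep1 : K ^ 2 * (‖P‖ * (ε * (2 * m + ε))) ≤ K ^ 2 * ‖P‖ * (ε * (2 * m + 1)) := by
    have h6 : ε * (2 * m + ε) ≤ ε * (2 * m + 1) := by nlinarith
    nlinarith [sq_nonneg K, mul_nonneg (sq_nonneg K) hPn]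
  have hstep2 : K ^ 2 * ‖P‖ * (ε * (2 * m + 1)) < 1 := by
    have hpos : 0 < ε * (2 * m + 1) := by nlinarith
    nlinarith [hεbound]
  linarith [hfin]

lemma memlp_vmul (V : ℤ → ℝ) (M : ℝ) (hM : ∀ n, |V n| ≤ M) (ψ : E2) :
    Memℓp (fun n => V n * ψ n) 2 := by
  have hM0 : 0 ≤ M := le_trans (abs_nonneg _) (hM 0)
  apply memℓp_gen
  refine Summable.of_nonneg_of_le (fun n => by positivity)
    (fun n => ?_) ((summable_sq ψ).mul_left (M ^ (2:ℝ≥0∞).toReal))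
  have h1 : ‖V n * ψ n‖ ≤ M * ‖ψ n‖ := by
    rw [norm_mul]
    exact mul_le_mul_of_nonneg_right (hM n) (norm_nonneg _)
  calc ‖V n * ψ n‖ ^ (2:ℝ≥0∞).toReal ≤ (M * ‖ψ n‖) ^ (2:ℝ≥0∞).toReal :=
        Real.rpow_le_rpow (norm_nonneg _) h1 (by norm_num)
    _ = M ^ (2:ℝ≥0∞).toReal * ‖ψ n‖ ^ (2:ℝ≥0∞).toReal :=
        Real.mul_rpow hM0 (norm_nonneg _)

lemma schrodinger_symm (A : E2 →L[ℝ] E2) (V : ℤ → ℝ) (M : ℝ) (hM : ∀ n, |V n| ≤ M)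
    (hA : ∀ (ψ : E2) (n : ℤ), (A ψ : ∀ _ : ℤ, ℝ) n = ψ (n+1) + ψ (n-1) + V n * ψ n)
    (ψ φ : E2) : ⟪A ψ, φ⟫_ℝ = ⟪ψ, A φ⟫_ℝ := by
  rw [lp.inner_eq_tsum, lp.inner_eq_tsum]
  simp only [RCLike.inner_apply, conj_trivial]
  have s1 : Summable fun n : ℤ => ψ (n+1) * φ n := by
    have := lp.summable_inner (𝕜 := ℝ) (e2shift ψ 1) φ
    simpa [RCLike.inner_apply, conj_trivial, mul_comm] using this
  have s2 : Summable fun n : ℤ => ψ (n-1) * φ n := by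
    have := lp.summable_inner (𝕜 := ℝ) (e2shift ψ (-1)) φ
    simpa [RCLike.inner_apply, conj_trivial, sub_eq_add_neg, mul_comm] using this
  have s3 : Summable fun n : ℤ => V n * ψ n * φ n := by
    have := lp.summable_inner (𝕜 := ℝ)
      (⟨fun n => V n * ψ n, memlp_vmul V M hM ψ⟩ : E2) φ
    simpa [RCLike.inner_apply, conj_trivial, mul_comm, mul_assoc, mul_left_comm] using this
  have s1' : Summable fun n : ℤ => ψ n * φ (n+1) := by
    have := lp.summable_inner (𝕜 := ℝ) ψ (e2shift φ 1)
    simpa [RCLike.inner_apply, conj_trivial, mul_comm] using this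
  have s2' : Summable fun n : ℤ => ψ n * φ (n-1) := by
    have := lp.summable_inner (𝕜 := ℝ) ψ (e2shift φ (-1))
    simpa [RCLike.inner_apply, conj_trivial, sub_eq_add_neg, mul_comm] using this
  have t1 : ∑' n : ℤ, ψ (n+1) * φ n = ∑' n : ℤ, ψ n * φ (n-1) := by
    rw [← Equiv.tsum_eq (Equiv.addRight (1:ℤ)) (fun n => ψ n * φ (n-1))]
    congr 1
    funext n
    simp [Equiv.coe_addRight]
  have t2 : ∑' n : ℤ, ψ (n-1) * φ n = ∑' n : ℤ, ψ n * φ (n+1) := by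
    rw [← Equiv.tsum_eq (Equiv.addRight (-1:ℤ)) (fun n => ψ n * φ (n+1))]
    congr 1
    funext n
    simp [Equiv.coe_addRight, sub_eq_add_neg]
  rw [show (∑' i : ℤ, φ i * (A ψ) i) = ∑' n : ℤ, (A ψ) n * φ n from tsum_congr fun n => mul_comm _ _,
    show (∑' i : ℤ, (A φ) i * ψ i) = ∑' n : ℤ, ψ n * (A φ) n from tsum_congr fun n => mul_comm _ _]
  calc ∑' n : ℤ, (A ψ) n * φ n
      = ∑' n : ℤ, (ψ (n+1) * φ n + ψ (n-1) * φ n + V n * ψ n * φ n) := by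
        refine tsum_congr fun n => ?_
        rw [hA]; ring
    _ = (∑' n : ℤ, ψ (n+1) * φ n) + (∑' n : ℤ, ψ (n-1) * φ n)
        + ∑' n : ℤ, V n * ψ n * φ n := by
        rw [(s1.add s2).tsum_add s3, s1.tsum_add s2]
    _ = (∑' n : ℤ, ψ n * φ (n-1)) + (∑' n : ℤ, ψ n * φ (n+1))
        + ∑' n : ℤ, V n * ψ n * φ n := by rw [t1, t2]
    _ = ∑' n : ℤ, (ψ n * φ (n+1) + ψ n * φ (n-1) + V n * ψ n * φ n) := by
        rw [(s1'.add s2').tsum_add s3, s1'.tsum_add s2']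
        ring
    _ = ∑' n : ℤ, ψ n * (A φ) n := by
        refine tsum_congr fun n => ?_
        rw [hA]; ring

lemma schrodinger_decomp (A : E2 →L[ℝ] E2) (V : ℤ → ℝ) (M : ℝ) (hM : ∀ n, |V n| ≤ M)
    (hA : ∀ (ψ : E2) (n : ℤ), (A ψ : ∀ _ : ℤ, ℝ) n = ψ (n+1) + ψ (n-1) + V n * ψ n)
    (ψ : E2) :
    A ψ = e2shift ψ 1 + e2shift ψ (-1)
      + (⟨fun n => V n * ψ n, memlp_vmul V M hM ψ⟩ : E2) := by
  ext n
  simp only [lp.coeFn_add, Pi.add_apply, e2shift_apply]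
  rw [hA]
  norm_num [sub_eq_add_neg]
  rfl

lemma schrodinger_norm (A : E2 →L[ℝ] E2) (V : ℤ → ℝ) (M : ℝ) (hM : ∀ n, |V n| ≤ M)
    (hA : ∀ (ψ : E2) (n : ℤ), (A ψ : ∀ _ : ℤ, ℝ) n = ψ (n+1) + ψ (n-1) + V n * ψ n) :
    ‖A‖ ≤ 2 + M := by
  have hM0 : 0 ≤ M := le_trans (abs_nonneg _) (hM 0)
  apply ContinuousLinearMap.opNorm_le_bound _ (by linarith)
  intro ψ
  rw [schrodinger_decomp A V M hM hA ψ]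
  have hv : ‖(⟨fun n => V n * ψ n, memlp_vmul V M hM ψ⟩ : E2)‖ ≤ M * ‖ψ‖ := by
    apply e2_dom _ ψ M hM0
    intro n
    show ‖V n * ψ n‖ ≤ M * ‖ψ n‖
    rw [norm_mul]
    exact mul_le_mul_of_nonneg_right (hM n) (norm_nonneg _)
  calc ‖e2shift ψ 1 + e2shift ψ (-1) + _‖
      ≤ ‖e2shift ψ 1‖ + ‖e2shift ψ (-1)‖ + ‖(⟨fun n => V n * ψ n, memlp_vmul V M hM ψ⟩ : E2)‖ :=
        norm_add₃_le
    _ ≤ ‖ψ‖ + ‖ψ‖ + M * ‖ψ‖ := by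
        rw [norm_e2shift, norm_e2shift]
        linarith
    _ = (2 + M) * ‖ψ‖ := by ring
/-- Proposition 5.1: the map `f ↦ Leb(Σ_f)` is upper semi-continuous: for every
`δ > 0`, the set `{f ∈ C(Ω,ℝ) : Leb(Σ_f) < δ}` is open.  Here `H f ω` is the
Schrödinger operator on `ℓ²(ℤ)` with potential `n ↦ f(Tⁿω)` and `Σ f` its
`μ`-almost sure spectrum. -/
theorem upperSemicontinuous_measure_spectrum {Ω : Type*} [MetricSpace Ω]
    [CompactSpace Ω] [MeasurableSpace Ω] [BorelSpace Ω]
    (T : Ω ≃ₜ Ω) (μ : Measure Ω) [IsProbabilityMeasure μ] (hμ : Ergodic (⇑T) μ)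
    (H : C(Ω, ℝ) → Ω → (lp (fun _ : ℤ => ℝ) 2 →L[ℝ] lp (fun _ : ℤ => ℝ) 2))
    (hH : ∀ (f : C(Ω, ℝ)) (ω : Ω) (ψ : lp (fun _ : ℤ => ℝ) 2) (n : ℤ),
      (H f ω ψ : ∀ _ : ℤ, ℝ) n = ψ (n + 1) + ψ (n - 1) + f ((T.toEquiv ^ n) ω) * ψ n)
    (Spec : C(Ω, ℝ) → Set ℝ)
    (hSpec : ∀ f : C(Ω, ℝ), ∀ᵐ ω ∂μ, spectrum ℝ (H f ω) = Spec f) :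
    ∀ δ : ENNReal, 0 < δ → IsOpen {f : C(Ω, ℝ) | volume (Spec f) < δ} := by
  have hμne : μ ≠ 0 := IsProbabilityMeasure.ne_zero μ
  have hNeBot : (MeasureTheory.ae μ).NeBot := MeasureTheory.ae_neBot.2 hμne
  haveI : Nontrivial E2 := by
    refine ⟨lp.single 2 (0:ℤ) (1:ℝ), 0, fun hcon => ?_⟩
    have h1 : (lp.single 2 (0:ℤ) (1:ℝ) : ∀ _ : ℤ, ℝ) 0 = 1 := lp.single_apply_self 2 0 1
    rw [hcon] at h1
    simpa using h1
  -- potential bound and hypotheses packaged per (f, ω)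
  have hVbd : ∀ (f : C(Ω, ℝ)) (ω : Ω) (n : ℤ), |f ((T.toEquiv ^ n) ω)| ≤ ‖f‖ := by
    intro f ω n
    exact (f.norm_coe_le_norm _)
  have hsymH : ∀ (f : C(Ω, ℝ)) (ω : Ω) (ψ φ : E2),
      ⟪H f ω ψ, φ⟫_ℝ = ⟪ψ, H f ω φ⟫_ℝ := by
    intro f ω
    exact schrodinger_symm (H f ω) (fun n => f ((T.toEquiv ^ n) ω)) ‖f‖
      (hVbd f ω) (fun ψ n => hH f ω ψ n)
  have hnormH : ∀ (f : C(Ω, ℝ)) (ω : Ω), ‖H f ω‖ ≤ 2 + ‖f‖ := by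
    intro f ω
    exact schrodinger_norm (H f ω) (fun n => f ((T.toEquiv ^ n) ω)) ‖f‖
      (hVbd f ω) (fun ψ n => hH f ω ψ n)
  have hdiffH : ∀ (f g : C(Ω, ℝ)) (ω : Ω) (ψ : E2),
      ‖H g ω ψ - H f ω ψ‖ ≤ ‖g - f‖ * ‖ψ‖ := by
    intro f g ω ψ
    have hdom : ∀ n : ℤ, ‖(H g ω ψ - H f ω ψ : E2) n‖ ≤ ‖g - f‖ * ‖ψ n‖ := by
      intro n
      have hcoe : (H g ω ψ - H f ω ψ : E2) n = (H g ω ψ : ∀ _ : ℤ, ℝ) n - (H f ω ψ : ∀ _ : ℤ, ℝ) n := by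
        rw [lp.coeFn_sub]; rfl
      rw [hcoe, hH, hH]
      have heq : (ψ : ∀ _ : ℤ, ℝ) (n+1) + ψ (n-1) + g ((T.toEquiv ^ n) ω) * ψ n
          - (ψ (n+1) + ψ (n-1) + f ((T.toEquiv ^ n) ω) * ψ n)
          = (g - f) ((T.toEquiv ^ n) ω) * ψ n := by
        rw [ContinuousMap.sub_apply]; ring
      rw [heq, norm_mul]
      exact mul_le_mul_of_nonneg_right (((g - f).norm_coe_le_norm _)) (norm_nonneg _)
    exact e2_dom _ ψ _ (norm_nonneg _) hdom
  intro δ hδ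
  rw [Metric.isOpen_iff]
  intro f hf
  obtain ⟨ω₀, hω₀⟩ := (hSpec f).exists
  have hclosed : IsClosed (Spec f) := hω₀ ▸ spectrum.isClosed (H f ω₀)
  obtain ⟨U, hsubU, hUo, hUlt⟩ := Set.exists_isOpen_lt_of_lt (Spec f) δ hf
  set M : ℝ := 3 + ‖f‖ with hMdef
  set C : Set ℝ := Set.Icc (-M) M \ U with hCdef
  have hCcomp : IsCompact C := isCompact_Icc.diff hUo
  have hCdisj : Disjoint C (Spec f) := by
    rw [Set.disjoint_left]
    intro z hz hzf
    exact hz.2 (hsubU hzf)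
  obtain ⟨d, hd, hthick⟩ := hCdisj.exists_thickenings hCcomp hclosed
  have hgapCS : ∀ z ∈ C, ∀ s ∈ Spec f, d ≤ |z - s| := by
    intro z hz s hs
    by_contra hlt
    push_neg at hlt
    have h1 : z ∈ Metric.thickening d C := Metric.self_subset_thickening hd C hz
    have h2 : z ∈ Metric.thickening d (Spec f) := by
      rw [Metric.mem_thickening_iff]
      exact ⟨s, hs, by rwa [Real.dist_eq]⟩
    exact Set.disjoint_left.1 hthick h1 h2
  refine ⟨min 1 (d/2), by positivity, ?_⟩
  intro g hg
  rw [Metric.mem_ball, dist_eq_norm] at hg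
  have hgf1 : ‖g - f‖ < 1 := lt_of_lt_of_le hg (min_le_left _ _)
  have hgfd : ‖g - f‖ < d/2 := lt_of_lt_of_le hg (min_le_right _ _)
  obtain ⟨ω, hωf, hωg⟩ := ((hSpec f).and (hSpec g)).exists
  show volume (Spec g) < δ
  have hsub : Spec g ⊆ U := by
    intro z hz
    have hzspec : z ∈ spectrum ℝ (H g ω) := by rw [hωg]; exact hz
    have hznorm : |z| ≤ M := by
      have h1 := spectrum.norm_le_norm_of_mem hzspec
      have h2 := hnormH g ω
      have h3 : ‖g‖ ≤ ‖f‖ + 1 := by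
        calc ‖g‖ = ‖f + (g - f)‖ := by ring_nf
          _ ≤ ‖f‖ + ‖g - f‖ := norm_add_le _ _
          _ ≤ ‖f‖ + 1 := by linarith
      rw [Real.norm_eq_abs] at h1
      rw [hMdef]
      linarith
    by_contra hzU
    have hzC : z ∈ C := ⟨⟨(abs_le.1 hznorm).1, (abs_le.1 hznorm).2⟩, hzU⟩
    set aZ : E2 →L[ℝ] E2 := algebraMap ℝ (E2 →L[ℝ] E2) z with haZ
    have haZapp : ∀ φ : E2, aZ φ = z • φ := by
      intro φ
      rw [haZ, Algebra.algebraMap_eq_smul_one, ContinuousLinearMap.smul_apply,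
        ContinuousLinearMap.one_apply]
    -- B := H f ω - z has spectral gap d
    have hgapB : ∀ t : ℝ, t ∈ spectrum ℝ (H f ω - aZ) → d ≤ |t| := by
      intro t ht
      rw [haZ, ← spectrum.sub_singleton_eq] at ht
      obtain ⟨s, hs, z', hz', hst⟩ := Set.mem_sub.1 ht
      rw [Set.mem_singleton_iff] at hz'
      rw [hz'] at hst
      have hsSpec : s ∈ Spec f := by rw [← hωf]; exact hs
      have := hgapCS z hzC s hsSpec
      rw [← hst, abs_sub_comm]
      exact this
    have hBsym : ∀ ψ φ : E2, ⟪(H f ω - aZ) ψ, φ⟫_ℝ = ⟪ψ, (H f ω - aZ) φ⟫_ℝ := by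
      intro ψ φ
      simp only [ContinuousLinearMap.sub_apply, haZapp, inner_sub_left, inner_sub_right,
        real_inner_smul_left, real_inner_smul_right, hsymH f ω ψ φ]
    have hBlb := bddBelow_of_gap (H f ω - aZ) hBsym d hgapB
    have hB'sym : ∀ ψ φ : E2, ⟪(H g ω - aZ) ψ, φ⟫_ℝ = ⟪ψ, (H g ω - aZ) φ⟫_ℝ := by
      intro ψ φ
      simp only [ContinuousLinearMap.sub_apply, haZapp, inner_sub_left, inner_sub_right,
        real_inner_smul_left, real_inner_smul_right, hsymH g ω ψ φ]
    have hB'lb : ∀ ψ : E2, (d/2) * ‖ψ‖ ≤ ‖(H g ω - aZ) ψ‖ := by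
      intro ψ
      have h1 : ‖(H f ω - aZ) ψ - (H g ω - aZ) ψ‖ ≤ ‖g - f‖ * ‖ψ‖ := by
        have : (H f ω - aZ) ψ - (H g ω - aZ) ψ = -(H g ω ψ - H f ω ψ) := by
          simp only [ContinuousLinearMap.sub_apply]
          abel
        rw [this, norm_neg]
        exact hdiffH f g ω ψ
      have h2 := hBlb ψ
      have h3 : ‖(H f ω - aZ) ψ‖ ≤ ‖(H g ω - aZ) ψ‖ + ‖g - f‖ * ‖ψ‖ := by
        calc ‖(H f ω - aZ) ψ‖ = ‖(H g ω - aZ) ψ + ((H f ω - aZ) ψ - (H g ω - aZ) ψ)‖ := by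
              congr 1; abel
          _ ≤ ‖(H g ω - aZ) ψ‖ + ‖(H f ω - aZ) ψ - (H g ω - aZ) ψ‖ := norm_add_le _ _
          _ ≤ ‖(H g ω - aZ) ψ‖ + ‖g - f‖ * ‖ψ‖ := by linarith
      have h4 : ‖g - f‖ * ‖ψ‖ ≤ (d/2) * ‖ψ‖ :=
        mul_le_mul_of_nonneg_right (le_of_lt hgfd) (norm_nonneg _)
      linarith
    have hunit := isUnit_of_symm_bddBelow (H g ω - aZ) hB'sym (d/2) (by linarith) hB'lb
    have : IsUnit (aZ - H g ω) := by
      have h5 : aZ - H g ω = -(H g ω - aZ) := by abel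
      rw [h5]
      exact hunit.neg
    rw [spectrum.mem_iff] at hzspec
    exact hzspec this
  calc volume (Spec g) ≤ volume U := measure_mono hsub
    _ < δ := hUlt
end

section
/- Let (Ω,T) be a non-uniquely ergodic dynamical system. Then there exists a continuous cocycle A : Ω → SL(2,R) that is uniformly hyperbolic but not uniform. -/
open scoped Matrix.Norms.L2Operator
open Filter Topology MeasureTheory

lemma norm_diag_pair {a : ℝ} (ha : 1 ≤ a) :
    ‖(Matrix.diagonal ![a, a⁻¹] : Matrix (Fin 2) (Fin 2) ℝ)‖ = a := by
  have ha0 : (0:ℝ) < a := lt_of_lt_of_le one_pos ha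
  have hnorm : ∀ v : EuclideanSpace ℝ (Fin 2), ‖v‖ = Real.sqrt (v 0 ^ 2 + v 1 ^ 2) := by
    intro v
    rw [EuclideanSpace.norm_eq]
    simp [Fin.sum_univ_two, Real.norm_eq_abs, sq_abs]
  set M : Matrix (Fin 2) (Fin 2) ℝ := Matrix.diagonal ![a, a⁻¹] with hM
  apply le_antisymm
  · rw [Matrix.l2_opNorm_def]
    apply ContinuousLinearMap.opNorm_le_bound _ ha0.le
    intro x
    have happ : ∀ i, ((Matrix.toEuclideanLin.trans LinearMap.toContinuousLinearMap) M x) i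
        = Matrix.mulVec M (fun j => x j) i := fun i => rfl
    have h0 : ((Matrix.toEuclideanLin.trans LinearMap.toContinuousLinearMap) M x) 0 = a * x 0 := by
      rw [happ, hM, Matrix.mulVec_diagonal]; simp
    have h1 : ((Matrix.toEuclideanLin.trans LinearMap.toContinuousLinearMap) M x) 1 = a⁻¹ * x 1 := by
      rw [happ, hM, Matrix.mulVec_diagonal]; simp
    rw [hnorm, h0, h1, hnorm x]
    rw [show a * Real.sqrt (x 0 ^ 2 + x 1 ^ 2) = Real.sqrt (a ^ 2 * (x 0 ^ 2 + x 1 ^ 2)) by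
      rw [Real.sqrt_mul (sq_nonneg a), Real.sqrt_sq ha0.le]]
    apply Real.sqrt_le_sqrt
    have hinv : a⁻¹ ≤ a := le_trans (inv_le_one_of_one_le₀ ha) ha
    have : (a⁻¹ * x 1) ^ 2 ≤ (a * x 1) ^ 2 := by
      have h2 : (0:ℝ) ≤ a⁻¹ := inv_nonneg.mpr ha0.le
      have := mul_self_le_mul_self h2 hinv
      nlinarith [sq_nonneg (x 1)]
    nlinarith
  · have key := ContinuousLinearMap.le_opNorm
      ((Matrix.toEuclideanLin.trans LinearMap.toContinuousLinearMap) M)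
      (EuclideanSpace.single (0 : Fin 2) (1:ℝ))
    rw [EuclideanSpace.norm_single, norm_one, mul_one] at key
    have happ : ∀ i, ((Matrix.toEuclideanLin.trans LinearMap.toContinuousLinearMap) M
        (EuclideanSpace.single (0 : Fin 2) (1:ℝ))) i
        = Matrix.mulVec M (fun j => (EuclideanSpace.single (0 : Fin 2) (1:ℝ)) j) i := fun i => rfl
    have hval : ‖(Matrix.toEuclideanLin.trans LinearMap.toContinuousLinearMap) M
        (EuclideanSpace.single (0 : Fin 2) (1:ℝ))‖ = a := by
      rw [hnorm, happ, happ, hM, Matrix.mulVec_diagonal, Matrix.mulVec_diagonal]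
      simp [EuclideanSpace.single_apply]
      rw [Real.sqrt_sq ha0.le]
    rw [← hval]
    exact key.trans_eq (Matrix.l2_opNorm_def M).symm

noncomputable def diagSL (x : ℝ) (hx : x ≠ 0) : SL2 :=
  ⟨Matrix.diagonal ![x, x⁻¹], by
    rw [Matrix.det_diagonal, Fin.prod_univ_two]
    simp [mul_inv_cancel₀ hx]⟩

lemma diagSL_coe (x : ℝ) (hx : x ≠ 0) :
    ((diagSL x hx : SL2) : Matrix (Fin 2) (Fin 2) ℝ) = Matrix.diagonal ![x, x⁻¹] := rfl

lemma diagSL_congr {x y : ℝ} {hx : x ≠ 0} {hy : y ≠ 0} (h : x = y) :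
    diagSL x hx = diagSL y hy := by subst h; rfl

lemma diagSL_mul (x y : ℝ) (hx : x ≠ 0) (hy : y ≠ 0) :
    diagSL x hx * diagSL y hy = diagSL (x * y) (mul_ne_zero hx hy) := by
  apply Subtype.ext
  show ((diagSL x hx : SL2) : Matrix (Fin 2) (Fin 2) ℝ) * diagSL y hy = _
  rw [diagSL_coe, diagSL_coe, diagSL_coe, Matrix.diagonal_mul_diagonal]
  have h1 : (fun i => ![x, x⁻¹] i * ![y, y⁻¹] i) = ![x * y, (x * y)⁻¹] := by
    funext i; fin_cases i <;> simp [mul_inv, mul_comm]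
  rw [h1]

lemma coc_exp {Ω : Type*} (T : Ω → Ω) (g : Ω → ℝ) (n : ℕ) (ω : Ω) :
    coc T (fun ω => diagSL (Real.exp (g ω)) (Real.exp_ne_zero _)) n ω
      = diagSL (Real.exp (∑ k ∈ Finset.range n, g (T^[k] ω))) (Real.exp_ne_zero _) := by
  induction n generalizing ω with
  | zero =>
    apply Subtype.ext
    show (1 : Matrix (Fin 2) (Fin 2) ℝ) = _
    rw [diagSL_coe]
    simp only [Finset.range_zero, Finset.sum_empty, Real.exp_zero, inv_one]
    have h1 : ![(1:ℝ), 1] = fun _ => (1:ℝ) := by funext i; fin_cases i <;> rfl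
    rw [h1]
    exact Matrix.diagonal_one.symm
  | succ n ih =>
    show coc T _ n (T ω) * _ = _
    rw [ih, diagSL_mul]
    apply diagSL_congr
    rw [← Real.exp_add, Finset.sum_range_succ']
    congr 1

lemma cocNorm_exp {Ω : Type*} (T : Ω → Ω) (g : Ω → ℝ) (hg : ∀ ω, 1 ≤ g ω) (n : ℕ) (ω : Ω) :
    cocNorm T (fun ω => diagSL (Real.exp (g ω)) (Real.exp_ne_zero _)) n ω
      = ∑ k ∈ Finset.range n, g (T^[k] ω) := by
  have hS : (0:ℝ) ≤ ∑ k ∈ Finset.range n, g (T^[k] ω) :=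
    Finset.sum_nonneg fun k _ => le_trans zero_le_one (hg _)
  rw [cocNorm, coc_exp, diagSL_coe, norm_diag_pair (Real.one_le_exp hS), Real.log_exp]

lemma integral_birkhoff_avg {Ω : Type*} [MetricSpace Ω] [CompactSpace Ω]
    [MeasurableSpace Ω] [BorelSpace Ω] {T : Ω → Ω} (hT : Continuous T)
    {m : Measure Ω} [IsProbabilityMeasure m] (hm : MeasurePreserving T m m)
    {g : Ω → ℝ} (hgc : Continuous g) (n : ℕ) (hn : 1 ≤ n) :
    ∫ ω, (1 / n : ℝ) * ∑ k ∈ Finset.range n, g (T^[k] ω) ∂m = ∫ ω, g ω ∂m := by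
  have hint : ∀ k : ℕ, Integrable (fun ω => g (T^[k] ω)) m := fun k =>
    ((hgc.comp (hT.iterate k)).integrable_of_hasCompactSupport
      ((isClosed_tsupport _).isCompact))
  have hco : ∀ k : ℕ, ∫ ω, g (T^[k] ω) ∂m = ∫ ω, g ω ∂m := by
    intro k
    have hmk : MeasurePreserving (T^[k]) m m := hm.iterate k
    calc ∫ ω, g (T^[k] ω) ∂m = ∫ y, g y ∂(MeasureTheory.Measure.map (T^[k]) m) :=
          (MeasureTheory.integral_map hmk.measurable.aemeasurable
            hgc.aestronglyMeasurable).symm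
      _ = ∫ ω, g ω ∂m := by rw [hmk.map_eq]
  rw [MeasureTheory.integral_const_mul, MeasureTheory.integral_finset_sum _ fun k _ => hint k]
  rw [Finset.sum_congr rfl fun k _ => hco k, Finset.sum_const, Finset.card_range,
    nsmul_eq_mul]
  rw [← mul_assoc, one_div, inv_mul_cancel₀ (Nat.cast_pos.mpr hn).ne',
    one_mul]

/-- Remark A.2: over any non-uniquely ergodic dynamical system there is a
continuous `SL(2,ℝ)` cocycle that is uniformly hyperbolic but not uniform. -/
theorem exists_uh_not_uniform {Ω : Type*} [MetricSpace Ω] [CompactSpace Ω]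
    [MeasurableSpace Ω] [BorelSpace Ω] (T : Ω ≃ₜ Ω)
    (μ ν : Measure Ω) [IsProbabilityMeasure μ] [IsProbabilityMeasure ν]
    (hμ : Ergodic (⇑T) μ) (hν : Ergodic (⇑T) ν) (hμν : μ ≠ ν) :
    ∃ A : Ω → SL2, Continuous (fun ω => (A ω : Matrix (Fin 2) (Fin 2) ℝ)) ∧
      UniformlyHyperbolic (⇑T) A ∧ ¬ IsUniformCocycle (⇑T) A := by
  -- a bounded continuous nonneg function separating μ and ν
  obtain ⟨f, hf⟩ : ∃ f : BoundedContinuousFunction Ω NNReal, ∫⁻ x, f x ∂μ ≠ ∫⁻ x, f x ∂ν := by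
    by_contra h
    push_neg at h
    exact hμν (MeasureTheory.ext_of_forall_lintegral_eq_of_IsFiniteMeasure h)
  set g : Ω → ℝ := fun ω => (f ω : ℝ) + 1 with hgdef
  have hgc : Continuous g := (NNReal.continuous_coe.comp f.continuous).add continuous_const
  have hg1 : ∀ ω, 1 ≤ g ω := fun ω => le_add_of_nonneg_left (f ω).coe_nonneg
  have hgint : ∀ (m : Measure Ω) [IsProbabilityMeasure m], Integrable g m := fun m _ =>
    hgc.integrable_of_hasCompactSupport ((isClosed_tsupport _).isCompact)
  have hfint : ∀ (m : Measure Ω) [IsProbabilityMeasure m],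
      Integrable (fun ω => (f ω : ℝ)) m := fun m _ =>
    (NNReal.continuous_coe.comp f.continuous).integrable_of_hasCompactSupport
      ((isClosed_tsupport _).isCompact)
  have hgne : ∫ ω, g ω ∂μ ≠ ∫ ω, g ω ∂ν := by
    have hlin : ∀ (m : Measure Ω) [IsProbabilityMeasure m],
        ∫⁻ x, f x ∂m = ENNReal.ofReal (∫ ω, (f ω : ℝ) ∂m) := by
      intro m _
      rw [MeasureTheory.ofReal_integral_eq_lintegral_ofReal (hfint m)
        (Filter.Eventually.of_forall fun ω => (f ω).coe_nonneg)]
      congr 1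
      funext ω
      exact (ENNReal.ofReal_coe_nnreal).symm
    intro h
    apply hf
    rw [hlin μ, hlin ν]
    congr 1
    have h2 := h
    rw [hgdef] at h2
    simp only [MeasureTheory.integral_add (hfint μ) (integrable_const 1),
      MeasureTheory.integral_add (hfint ν) (integrable_const 1),
      MeasureTheory.integral_const, MeasureTheory.probReal_univ, smul_eq_mul,
      one_mul, add_left_inj] at h2
    exact h2
  -- the cocycle
  refine ⟨fun ω => diagSL (Real.exp (g ω)) (Real.exp_ne_zero _), ?_, ?_, ?_⟩
  · -- continuity
    have hrep : (fun ω => ((diagSL (Real.exp (g ω)) (Real.exp_ne_zero _) : SL2) :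
        Matrix (Fin 2) (Fin 2) ℝ))
        = fun ω => Real.exp (g ω) • (!![1,0;0,0] : Matrix (Fin 2) (Fin 2) ℝ)
          + (Real.exp (g ω))⁻¹ • (!![0,0;0,1] : Matrix (Fin 2) (Fin 2) ℝ) := by
      funext ω
      rw [diagSL_coe]
      ext i j
      fin_cases i <;> fin_cases j <;>
        simp [Matrix.diagonal]
    rw [hrep]
    have hexp : Continuous fun ω => Real.exp (g ω) := Real.continuous_exp.comp hgc
    exact (hexp.smul continuous_const).add
      ((hexp.inv₀ fun ω => Real.exp_ne_zero _).smul continuous_const)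
  · -- uniformly hyperbolic
    refine ⟨1, one_pos, fun ε hε => ⟨1, fun n hn ω => ?_⟩⟩
    rw [cocNorm_exp _ g hg1]
    have hnpos : (0:ℝ) < n := by exact_mod_cast hn
    have hsum : (n:ℝ) ≤ ∑ k ∈ Finset.range n, g ((⇑T)^[k] ω) := by
      calc (n:ℝ) = ∑ _k ∈ Finset.range n, (1:ℝ) := by simp
      _ ≤ _ := Finset.sum_le_sum fun k _ => hg1 _
    have : (1:ℝ) ≤ (1 / n : ℝ) * ∑ k ∈ Finset.range n, g ((⇑T)^[k] ω) := by
      rw [one_div, ← div_eq_inv_mul, le_div_iff₀ hnpos, one_mul]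
      exact hsum
    linarith
  · -- not uniform
    rintro ⟨L, hL⟩
    have key : ∀ (m : Measure Ω) [IsProbabilityMeasure m],
        MeasurePreserving (⇑T) m m → ∫ ω, g ω ∂m = L := by
      intro m _ hm
      have habs : ∀ ε > (0:ℝ), |∫ ω, g ω ∂m - L| ≤ ε := by
        intro ε hε
        obtain ⟨N, hN⟩ := hL ε hε
        set n : ℕ := max N 1 with hn
        have hn1 : 1 ≤ n := le_max_right _ _
        have hnN : N ≤ n := le_max_left _ _
        have hbd : ∀ ω, |(1 / n : ℝ) * ∑ k ∈ Finset.range n, g ((⇑T)^[k] ω) - L| ≤ ε := by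
          intro ω
          have := hN n hnN ω
          rw [cocNorm_exp _ g hg1] at this
          exact this.le
        have heq : ∫ ω, ((1 / n : ℝ) * ∑ k ∈ Finset.range n, g ((⇑T)^[k] ω) - L) ∂m
            = ∫ ω, g ω ∂m - L := by
          have hintS : Integrable
              (fun ω => (1 / n : ℝ) * ∑ k ∈ Finset.range n, g ((⇑T)^[k] ω)) m := by
            apply Continuous.integrable_of_hasCompactSupport
            · exact continuous_const.mul (continuous_finset_sum _ fun k _ =>
                hgc.comp (T.continuous.iterate k))
            · exact (isClosed_tsupport _).isCompact
          rw [MeasureTheory.integral_sub hintS (integrable_const L),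
            integral_birkhoff_avg T.continuous hm hgc n hn1,
            MeasureTheory.integral_const, MeasureTheory.probReal_univ, one_smul]
        rw [← heq]
        calc |∫ ω, ((1 / n : ℝ) * ∑ k ∈ Finset.range n, g ((⇑T)^[k] ω) - L) ∂m|
            ≤ ε * (m Set.univ).toReal := by
              rw [← Real.norm_eq_abs]
              exact MeasureTheory.norm_integral_le_of_norm_le_const
                (Filter.Eventually.of_forall fun ω => by
                  rw [Real.norm_eq_abs]; exact hbd ω)
          _ = ε := by rw [measure_univ, ENNReal.toReal_one, mul_one]
      have h0 : |∫ ω, g ω ∂m - L| ≤ 0 := by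
        refine le_of_forall_pos_le_add fun ε hε => ?_
        rw [zero_add]
        exact habs ε hε
      have := abs_nonpos_iff.mp h0
      linarith [sub_eq_zero.mp this]
    have h1 := key μ hμ.toMeasurePreserving
    have h2 := key ν hν.toMeasurePreserving
    exact hgne (h1.trans h2.symm)
end
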